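/- arXiv:2208.13216 — 7 statements merged into one kernel-verified Lean document; each statement's English description precedes it below -/
import Mathlib

section
/- Let G be a connected graph on n vertices with diameter 2. Then for i = 1,...,n-1, the i-th largest eigenvalue of the reciprocal distance Laplacian matrix RD^L(G) equals (n + μ_i(G))/2, where μ_1(G) ≥ ... ≥ μ_{n-1}(G) are the n-1 largest Laplacian eigenvalues of G. -/
open Matrix Polynomial

/-- The reciprocal distance (Harary) matrix of a graph: `(i,j)`-entry is `1/d(i,j)`
for `i ≠ j` and `0` on the diagonal. -/
noncomputable def RD {V : Type*} [Fintype V] [DecidableEq V] (G : SimpleGraph V) :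
    Matrix V V ℝ :=
  fun u v => if u = v then 0 else ((G.dist u v : ℝ))⁻¹

/-- The reciprocal distance degree of a vertex: `RTr(v) = ∑_{u ≠ v} 1/d(v,u)`. -/
noncomputable def RTr {V : Type*} [Fintype V] [DecidableEq V] (G : SimpleGraph V) (v : V) : ℝ :=
  ∑ u, RD G v u

/-- The reciprocal distance Laplacian matrix `RD^L(G) = RT(G) - RD(G)`. -/
noncomputable def RDL {V : Type*} [Fintype V] [DecidableEq V] (G : SimpleGraph V) :
    Matrix V V ℝ :=
  Matrix.diagonal (RTr G) - RD G

/-- `e : Fin n → ℝ` enumerates the eigenvalues of `M` in (weakly) decreasing order,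
with multiplicities, where the eigenvalues (with multiplicity) are the roots of the
characteristic polynomial. -/
def IsEigEnum {V : Type*} [Fintype V] [DecidableEq V] (M : Matrix V V ℝ)
    (e : Fin (Fintype.card V) → ℝ) : Prop :=
  Antitone e ∧ (↑(List.ofFn e) : Multiset ℝ) = M.charpoly.roots

/- Auxiliary lemmas -/

lemma eval_charpoly' {n : Type*} [Fintype n] [DecidableEq n] {R : Type*} [CommRing R]
    (M : Matrix n n R) (t : R) : M.charpoly.eval t = (t • (1 : Matrix n n R) - M).det := by
  rw [Matrix.charpoly, ← Polynomial.coe_evalRingHom, RingHom.map_det]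
  congr 1
  ext i j
  by_cases h : i = j
  · subst h; simp [charmatrix_apply_eq, Matrix.one_apply]
  · simp [charmatrix_apply_ne _ _ _ h, Matrix.one_apply_ne h]

lemma dist_cases {V : Type*} (G : SimpleGraph V) [DecidableRel G.Adj]
    (hc : G.Connected) (hd : G.diam = 2) {u v : V} (huv : u ≠ v) :
    G.dist u v = if G.Adj u v then 1 else 2 := by
  have h1 : G.dist u v ≤ 2 := hd ▸ G.dist_le_diam (G.ediam_ne_top_of_diam_ne_zero (by omega))
  have h2 : 0 < G.dist u v := hc.pos_dist_of_ne huv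
  by_cases ha : G.Adj u v
  · simp [ha, SimpleGraph.dist_eq_one_iff_adj.mpr ha]
  · simp only [ha, if_false]
    have hne1 : G.dist u v ≠ 1 := fun h => ha (SimpleGraph.dist_eq_one_iff_adj.mp h)
    omega

lemma RDL_eq {V : Type*} [Fintype V] [DecidableEq V] (G : SimpleGraph V) [DecidableRel G.Adj]
    (hc : G.Connected) (hd : G.diam = 2) :
    RDL G = (2:ℝ)⁻¹ • ((Fintype.card V : ℝ) • (1 : Matrix V V ℝ)
      - Matrix.of (fun _ _ => (1:ℝ)) + G.lapMatrix ℝ) := by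
  have hRD : ∀ u v, RD G u v =
      (1 + if G.Adj u v then 1 else 0) / 2 - if u = v then (1:ℝ)/2 else 0 := by
    intro u v
    by_cases h : u = v
    · subst h; norm_num [RD]
    · rw [RD, if_neg h, dist_cases G hc hd h, if_neg h]
      by_cases ha : G.Adj u v <;> simp [ha] <;> norm_num
  have hRTr : ∀ v, RTr G v = ((Fintype.card V : ℝ) + G.degree v) / 2 - 1/2 := by
    intro v
    simp only [RTr, hRD]
    rw [Finset.sum_sub_distrib, ← Finset.sum_div, Finset.sum_add_distrib]
    simp [Finset.card_univ, ← G.degree_eq_sum_if_adj v]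
  ext u v
  simp only [RDL, Matrix.sub_apply, Matrix.add_apply, Matrix.smul_apply, Matrix.of_apply,
    SimpleGraph.lapMatrix, SimpleGraph.degMatrix, Matrix.sub_apply, Matrix.diagonal_apply,
    SimpleGraph.adjMatrix_apply, Matrix.one_apply, smul_eq_mul]
  by_cases h : u = v
  · subst h
    simp [hRTr, hRD]
    ring
  · simp [h, hRD u v]
    by_cases ha : G.Adj u v <;> simp [ha] <;> ring

lemma roots_rel {V : Type*} [Fintype V] [DecidableEq V] (G : SimpleGraph V) [DecidableRel G.Adj]
    (hc : G.Connected) (hd : G.diam = 2)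
    (hQcard : (G.lapMatrix ℝ).charpoly.roots.card = Fintype.card V) :
    ((Fintype.card V : ℝ)/2) ::ₘ (RDL G).charpoly.roots
      = 0 ::ₘ ((G.lapMatrix ℝ).charpoly.roots).map (fun μ => ((Fintype.card V : ℝ) + μ)/2) := by
  set n : ℕ := Fintype.card V with hn
  set L : Matrix V V ℝ := G.lapMatrix ℝ with hL
  set Q : ℝ[X] := L.charpoly with hQdef
  set P : ℝ[X] := (RDL G).charpoly with hPdef
  set f : ℝ → ℝ := fun μ => ((n : ℝ) + μ)/2 with hf
  have hQm : Q.Monic := L.charpoly_monic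
  have hQdeg : Q.natDegree = n := L.charpoly_natDegree_eq_dim
  have hQprod : (Q.roots.map fun a => X - C a).prod = Q :=
    prod_multiset_X_sub_C_of_monic_of_roots_card_eq hQm (by rw [hQcard, hQdeg])
  have hQeval : ∀ y : ℝ, Q.eval y = (Q.roots.map fun a => (y - a)).prod := by
    intro y
    conv_lhs => rw [← hQprod]
    rw [eval_multiset_prod, Multiset.map_map]
    simp
  have key : (X - C ((n:ℝ)/2)) * P
      = X * ((Q.roots.map f).map fun a => X - C a).prod := by
    apply eq_of_infinite_eval_eq
    have hfin : (((Q.roots.toFinset.image f) ∪ {(n:ℝ)/2} : Finset ℝ) : Set ℝ).Finite :=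
      Finset.finite_toSet _
    apply Set.Infinite.mono _ hfin.infinite_compl
    intro x hx
    simp only [Set.mem_compl_iff, Finset.coe_union, Set.mem_union, Finset.coe_image,
      Set.mem_image, Finset.mem_coe, Multiset.mem_toFinset, Finset.coe_singleton,
      Set.mem_singleton_iff, not_or, not_exists, not_and] at hx
    obtain ⟨hx1, hx2⟩ := hx
    set y : ℝ := 2*x - n with hy
    have hyne : y ≠ 0 := by
      intro h; apply hx2; rw [hy] at h; linarith
    have hynroot : Q.eval y ≠ 0 := by
      intro h
      have hQne : Q ≠ 0 := hQm.ne_zero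
      have : y ∈ Q.roots := by rw [mem_roots hQne]; exact h
      exact hx1 y this (by rw [hf]; simp only; rw [hy]; ring)
    set A : Matrix V V ℝ := y • (1 : Matrix V V ℝ) - L with hA
    have hdetA : A.det = Q.eval y := (eval_charpoly' L y).symm
    have hAunit : IsUnit A.det := by rw [hdetA]; exact Ne.isUnit hynroot
    have hAone : A *ᵥ (fun _ => (1:ℝ)) = y • (fun _ => (1:ℝ)) := by
      rw [hA, sub_mulVec, smul_mulVec, one_mulVec, hL,
        G.lapMatrix_mulVec_const_eq_zero, sub_zero]
    have hAinv : A⁻¹ *ᵥ (fun _ => (1:ℝ)) = y⁻¹ • (fun _ => (1:ℝ)) := by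
      have h0 : A⁻¹ *ᵥ (fun _ => (1:ℝ)) = A⁻¹ *ᵥ (y⁻¹ • (A *ᵥ fun _ => (1:ℝ))) := by
        rw [hAone, smul_smul, inv_mul_cancel₀ hyne, one_smul]
      rw [h0, mulVec_smul, mulVec_mulVec, Matrix.nonsing_inv_mul A hAunit, one_mulVec]
    have hJ : (Matrix.of (fun _ _ => (1:ℝ)) : Matrix V V ℝ)
        = Matrix.replicateCol Unit (fun _ => (1:ℝ)) * Matrix.replicateRow Unit (fun _ => (1:ℝ)) := by
      ext i j; simp [Matrix.mul_apply]
    have hdetAJ : (A + Matrix.of (fun _ _ => (1:ℝ))).det = A.det * (1 + y⁻¹ * n) := by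
      rw [hJ, det_add_replicateCol_mul_replicateRow hAunit]
      congr 1
      rw [Matrix.mul_assoc, ← replicateCol_mulVec, hAinv, det_unique]
      simp [Matrix.replicateRow_mul_replicateCol_apply, dotProduct, Finset.card_univ, hn, mul_comm]
    have hsplit : x • (1 : Matrix V V ℝ) - RDL G
        = (2:ℝ)⁻¹ • (A + Matrix.of (fun _ _ => (1:ℝ))) := by
      rw [RDL_eq G hc hd, hA]
      ext i j
      simp only [Matrix.sub_apply, Matrix.add_apply, Matrix.smul_apply, Matrix.of_apply,
        smul_eq_mul]
      rw [hy]
      ring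
    have hPx : P.eval x = (2:ℝ)⁻¹^n * (A.det * (1 + y⁻¹ * n)) := by
      rw [hPdef, eval_charpoly', hsplit, Matrix.det_smul, hdetAJ, hn]
    have hprodx : ((Q.roots.map f).map fun a => X - C a).prod.eval x
        = (2:ℝ)⁻¹^n * Q.eval y := by
      rw [eval_multiset_prod, Multiset.map_map, Multiset.map_map, hQeval y]
      rw [show ((eval x ∘ fun a => X - C a) ∘ f) = fun a : ℝ => (fun _ : ℝ => (2:ℝ)⁻¹) a * (y - a)
        by funext a; simp only [Function.comp_apply, eval_sub, eval_X, eval_C, hf, hy]; ring]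
      rw [Multiset.prod_map_mul, Multiset.map_const', Multiset.prod_replicate, hQcard]
    simp only [Set.mem_setOf_eq, eval_mul, eval_sub, eval_X, eval_C, hPx, hprodx, ← hdetA]
    have h2 : x - (n:ℝ)/2 = y / 2 := by rw [hy]; ring
    rw [h2]
    field_simp
    ring
  have hPne : P ≠ 0 := (Matrix.charpoly_monic _).ne_zero
  have hXCne : (X - C ((n:ℝ)/2)) ≠ 0 := X_sub_C_ne_zero _
  have hprodmonic : (((Q.roots.map f).map fun a => X - C a).prod).Monic :=
    monic_multiset_prod_of_monic _ _ (fun a _ => monic_X_sub_C a)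
  have := congrArg Polynomial.roots key
  rw [roots_mul (mul_ne_zero hXCne hPne), roots_mul (mul_ne_zero X_ne_zero hprodmonic.ne_zero),
    roots_X_sub_C, roots_X, roots_multiset_prod_X_sub_C] at this
  rw [← Multiset.singleton_add, ← Multiset.singleton_add]
  exact this

lemma lap_root_nonneg {V : Type*} [Fintype V] [DecidableEq V] (G : SimpleGraph V)
    [DecidableRel G.Adj] : ∀ μ ∈ (G.lapMatrix ℝ).charpoly.roots, 0 ≤ μ := by
  intro μ hμ
  have h0 : ((G.lapMatrix ℝ).charpoly).eval μ = 0 := isRoot_of_mem_roots hμ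
  rw [eval_charpoly'] at h0
  obtain ⟨v, hv, hveq⟩ := (Matrix.exists_mulVec_eq_zero_iff).mpr h0
  have hLv : G.lapMatrix ℝ *ᵥ v = μ • v := by
    have := hveq
    rw [sub_mulVec, smul_mulVec, one_mulVec, sub_eq_zero] at this
    exact this.symm
  have hps := (SimpleGraph.posSemidef_lapMatrix ℝ G).dotProduct_mulVec_nonneg v
  rw [star_trivial, hLv] at hps
  have h1 : v ⬝ᵥ μ • v = μ * (v ⬝ᵥ v) := by
    simp only [dotProduct, Pi.smul_apply, smul_eq_mul, Finset.mul_sum]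
    exact Finset.sum_congr rfl fun i _ => by ring
  rw [h1] at hps
  have h2 : 0 < v ⬝ᵥ v := by
    rcases lt_or_eq_of_le (Finset.sum_nonneg fun i _ => mul_self_nonneg (v i) :
        (0:ℝ) ≤ v ⬝ᵥ v) with h | h
    · exact h
    · exact absurd (dotProduct_self_eq_zero.mp h.symm) hv
  by_contra hneg
  push_neg at hneg
  nlinarith

lemma core_enum {n : ℕ} (hn : 0 < n) (c : ℝ) (hc : 0 < c) (e m : Fin n → ℝ)
    (hea : Antitone e) (hma : Antitone m) (hm0 : ∀ i, 0 ≤ m i)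
    (hkey : (c/2) ::ₘ (↑(List.ofFn e) : Multiset ℝ)
      = 0 ::ₘ ((↑(List.ofFn m) : Multiset ℝ)).map (fun μ => (c + μ)/2)) :
    ∀ i : Fin n, (i : ℕ) < n - 1 → e i = (c + m i)/2 := by
  obtain ⟨k, rfl⟩ : ∃ k, n = k + 1 := ⟨n - 1, (Nat.succ_pred_eq_of_pos hn).symm⟩
  set f : ℝ → ℝ := fun μ => (c + μ)/2 with hf
  -- m at the last index is 0
  have hmlast : m (Fin.last k) = 0 := by
    have hmem : (c/2) ∈ (0 ::ₘ ((↑(List.ofFn m) : Multiset ℝ)).map f) := by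
      rw [← hkey]; exact Multiset.mem_cons_self _ _
    rw [Multiset.mem_cons] at hmem
    rcases hmem with h | h
    · linarith
    · rw [Multiset.mem_map] at h
      obtain ⟨μ, hμm, hμ⟩ := h
      have hμ0 : μ = 0 := by rw [hf] at hμ; simp at hμ; linarith
      rw [Multiset.mem_coe, List.mem_ofFn] at hμm
      obtain ⟨j, hj⟩ := hμm
      have := hma (Fin.le_last j)
      rw [hj, hμ0] at this
      exact le_antisymm this (hm0 _)
  set e' : Fin (k+1) → ℝ := fun i => if (i : ℕ) < k then f (m i) else 0 with he'
  have he'val : ∀ i : Fin (k+1), (i:ℕ) < k → e' i = f (m i) := by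
    intro i hi; rw [he']; simp [hi]
  have hf0 : ∀ i, (0:ℝ) ≤ f (m i) := fun i => by
    have := hm0 i; rw [hf]; simp; linarith
  have hea' : Antitone e' := by
    intro i j hij
    rw [he']
    simp only
    by_cases hj : (j:ℕ) < k
    · have hi : (i:ℕ) < k := lt_of_le_of_lt (by exact_mod_cast hij) hj
      rw [if_pos hi, if_pos hj, hf]
      have := hma hij
      simp only
      linarith
    · rw [if_neg hj]
      by_cases hi : (i:ℕ) < k
      · rw [if_pos hi]; exact hf0 i
      · rw [if_neg hi]
  -- multiset equality between ofFn e and ofFn e'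
  have hsplit : ∀ (g : Fin (k+1) → ℝ), (↑(List.ofFn g) : Multiset ℝ)
      = (↑(List.ofFn fun i : Fin k => g i.castSucc) : Multiset ℝ) + {g (Fin.last k)} := by
    intro g
    rw [List.ofFn_succ' g, List.concat_eq_append, ← Multiset.coe_add, Multiset.coe_singleton]
  have hperm : (↑(List.ofFn e) : Multiset ℝ) = (↑(List.ofFn e') : Multiset ℝ) := by
    have hrhs : ((↑(List.ofFn m) : Multiset ℝ)).map f
        = ((↑(List.ofFn fun i : Fin k => m i.castSucc) : Multiset ℝ)).map f + {c/2} := by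
      rw [hsplit m, Multiset.map_add, hmlast]
      congr 1
      rw [hf]
      simp
    have he'multi : (↑(List.ofFn e') : Multiset ℝ)
        = ((↑(List.ofFn fun i : Fin k => m i.castSucc) : Multiset ℝ)).map f + {0} := by
      rw [hsplit e']
      congr 1
      · rw [Multiset.map_coe]
        congr 1
        rw [List.map_ofFn]
        congr 1
        funext i
        rw [Function.comp_apply]
        exact he'val i.castSucc (by simpa using i.isLt)
      · rw [he']; simp
    have : (c/2) ::ₘ (↑(List.ofFn e) : Multiset ℝ)
        = (c/2) ::ₘ (((↑(List.ofFn fun i : Fin k => m i.castSucc) : Multiset ℝ)).map f + {0}) := by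
      rw [hkey, hrhs]
      simp only [← Multiset.singleton_add]
      abel
    rw [he'multi]
    exact (Multiset.cons_inj_right _).mp this
  -- both sorted, so equal
  have hsorted : ∀ (g : Fin (k+1) → ℝ), Antitone g → (List.ofFn g).Pairwise (· ≥ ·) := by
    intro g hg
    rw [List.pairwise_ofFn]
    intro i j hij
    exact hg (le_of_lt hij)
  have heq : List.ofFn e = List.ofFn e' :=
    (Multiset.coe_eq_coe.mp hperm).eq_of_pairwise' (hsorted e hea) (hsorted e' hea')
  have hee' : e = e' := List.ofFn_injective heq
  intro i hi
  rw [hee', he'val i (by omega), hf]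

theorem stmt0 {V : Type*} [Fintype V] [DecidableEq V] (G : SimpleGraph V) [DecidableRel G.Adj]
    (hc : G.Connected) (hd : G.diam = 2)
    (e m : Fin (Fintype.card V) → ℝ)
    (he : IsEigEnum (RDL G) e) (hm : IsEigEnum (G.lapMatrix ℝ) m) :
    ∀ i : Fin (Fintype.card V), (i : ℕ) < Fintype.card V - 1 →
      e i = ((Fintype.card V : ℝ) + m i) / 2 := by
  have hne : Nonempty V := hc.nonempty
  have hn0 : 0 < Fintype.card V := Fintype.card_pos
  have hQcard : (G.lapMatrix ℝ).charpoly.roots.card = Fintype.card V := by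
    rw [← hm.2, Multiset.coe_card, List.length_ofFn]
  have hkey := roots_rel G hc hd hQcard
  rw [← he.2, ← hm.2] at hkey
  have hm0 : ∀ i, 0 ≤ m i := by
    intro i
    apply lap_root_nonneg G
    rw [← hm.2, Multiset.mem_coe, List.mem_ofFn]
    exact ⟨i, rfl⟩
  exact core_enum hn0 (Fintype.card V : ℝ) (by exact_mod_cast hn0) e m he.1 hm.1 hm0 hkey
end

section
/- Let G be a connected graph on n vertices and G' = G + e the graph obtained by adding an edge e ∉ E(G). Then λ_i(RD^L(G')) ≥ λ_i(RD^L(G)) for all i = 1,...,n, where eigenvalues are ordered in decreasing order. -/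
open Matrix Polynomial

section Auxiliary

set_option linter.unusedSectionVars false

open RealInnerProductSpace

/-! ### Characteristic polynomial of a Hermitian real matrix -/

lemma aux_charpoly_conj {n : Type*} [Fintype n] [DecidableEq n] {R : Type*} [CommRing R]
    (U D W : Matrix n n R) (h2 : U * W = 1) :
    (U * D * W).charpoly = D.charpoly := by
  have hcomm : ∀ M : Matrix n n R[X],
      M * Matrix.scalar n (X : R[X]) = Matrix.scalar n (X : R[X]) * M :=
    fun M => ((scalar_commute (X : R[X]) (fun r' => Commute.all _ _) M).symm).eq
  have key : charmatrix (U * D * W) =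
      (C : R →+* R[X]).mapMatrix U * charmatrix D * (C : R →+* R[X]).mapMatrix W := by
    simp only [charmatrix, mul_sub, sub_mul]
    congr 1
    · rw [mul_assoc, ← hcomm, ← mul_assoc, ← _root_.map_mul, h2, _root_.map_one, one_mul]
    · rw [← _root_.map_mul, ← _root_.map_mul]
  rw [Matrix.charpoly, Matrix.charpoly, key, det_mul, det_mul]
  have h3 : ((C : R →+* R[X]).mapMatrix U).det * ((C : R →+* R[X]).mapMatrix W).det = 1 := by
    rw [← det_mul, ← _root_.map_mul, h2, _root_.map_one, det_one]
  calc ((C : R →+* R[X]).mapMatrix U).det * (charmatrix D).det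
      * ((C : R →+* R[X]).mapMatrix W).det
      = (charmatrix D).det * (((C : R →+* R[X]).mapMatrix U).det
        * ((C : R →+* R[X]).mapMatrix W).det) := by ring
    _ = (charmatrix D).det := by rw [h3, mul_one]

lemma aux_charpoly_diag {n : Type*} [Fintype n] [DecidableEq n] {R : Type*} [CommRing R]
    (d : n → R) : (Matrix.diagonal d).charpoly = ∏ j, (X - C (d j)) := by
  rw [Matrix.charpoly]
  have : charmatrix (Matrix.diagonal d) = Matrix.diagonal fun j => (X - C (d j)) := by
    ext i j
    by_cases h : i = j
    · subst h; simp
    · simp [h, Matrix.diagonal_apply_ne _ h]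
  rw [this, det_diagonal]

lemma aux_charpoly_roots_herm {V : Type*} [Fintype V] [DecidableEq V]
    (A : Matrix V V ℝ) (hA : A.IsHermitian) :
    A.charpoly.roots = Finset.univ.val.map hA.eigenvalues := by
  have hd : (RCLike.ofReal ∘ hA.eigenvalues : V → ℝ) = hA.eigenvalues := by
    ext j; simp
  have h := hA.spectral_theorem
  rw [hd] at h
  have h2 : (hA.eigenvectorUnitary : Matrix V V ℝ) * star (hA.eigenvectorUnitary : Matrix V V ℝ)
      = 1 := (Matrix.mem_unitaryGroup_iff).mp hA.eigenvectorUnitary.2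
  rw [show A.charpoly = (Matrix.diagonal hA.eigenvalues).charpoly by
        conv_lhs => rw [h]
        exact aux_charpoly_conj _ _ _ h2,
      aux_charpoly_diag]
  rw [← Polynomial.roots_multiset_prod_X_sub_C (Finset.univ.val.map hA.eigenvalues)]
  congr 1
  rw [Multiset.map_map, Finset.prod_eq_multiset_prod]
  rfl

/-! ### Uniqueness of antitone eigenvalue enumerations -/

lemma aux_eig_enum_unique {n : ℕ} (e f : Fin n → ℝ) (he : Antitone e) (hf : Antitone f)
    (h : (↑(List.ofFn e) : Multiset ℝ) = ↑(List.ofFn f)) : e = f := by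
  have hp : (List.ofFn e).Perm (List.ofFn f) := Multiset.coe_eq_coe.mp h
  have hse : (List.ofFn e).Pairwise (· ≥ ·) := by
    rw [List.pairwise_ofFn]
    intro i j hij
    exact he hij.le
  have hsf : (List.ofFn f).Pairwise (· ≥ ·) := by
    rw [List.pairwise_ofFn]
    intro i j hij
    exact hf hij.le
  have := List.Perm.eq_of_pairwise (fun a b _ _ h1 h2 => le_antisymm h2 h1) hse hsf hp
  funext i
  have := congrArg (fun l => l[i.1]?) this
  simpa using this

lemma aux_ofFn_multiset_eq {n : ℕ} {α : Type*} (g : Fin n → α) :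
    (↑(List.ofFn g) : Multiset α) = Finset.univ.val.map g := by
  rw [List.ofFn_eq_map]
  rfl

/-! ### Existence of a sorted eigen-decomposition -/

lemma aux_exists_sorted_eigen {V : Type*} [Fintype V] [DecidableEq V]
    (A : Matrix V V ℝ) (hA : A.IsHermitian) :
    ∃ (μ : Fin (Fintype.card V) → ℝ) (b : OrthonormalBasis (Fin (Fintype.card V)) ℝ
        (EuclideanSpace ℝ V)),
      Antitone μ ∧ (∀ k, A *ᵥ (b k : V → ℝ) = μ k • (b k : V → ℝ)) ∧
      (↑(List.ofFn μ) : Multiset ℝ) = A.charpoly.roots := by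
  classical
  let ε : Fin (Fintype.card V) ≃ V := (Fintype.equivFin V).symm
  let f : Fin (Fintype.card V) → ℝ := hA.eigenvalues ∘ ε
  let σ : Equiv.Perm (Fin (Fintype.card V)) := Tuple.sort (fun k => -f k)
  have hmono := Tuple.monotone_sort (fun k => -f k)
  refine ⟨f ∘ σ, hA.eigenvectorBasis.reindex ((σ.trans ε).symm), ?_, ?_, ?_⟩
  · intro i j hij
    have := hmono hij
    simp only [Function.comp_apply] at this ⊢
    linarith
  · intro k
    have : (hA.eigenvectorBasis.reindex ((σ.trans ε).symm)) k
        = hA.eigenvectorBasis (ε (σ k)) := by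
      simp [OrthonormalBasis.reindex_apply]
    rw [this]
    exact hA.mulVec_eigenvectorBasis (ε (σ k))
  · rw [aux_charpoly_roots_herm A hA, aux_ofFn_multiset_eq]
    have h1 : Multiset.map (f ∘ σ) Finset.univ.val = Multiset.map f
        (Finset.univ.val.map σ) := by rw [Multiset.map_map]
    have h2 : (Finset.univ.val.map (σ : Fin _ → Fin _)) = Finset.univ.val := by
      have := Finset.map_univ_equiv (σ : Equiv.Perm (Fin (Fintype.card V)))
      calc Finset.univ.val.map (σ : Fin _ → Fin _)
          = (Finset.univ.map σ.toEmbedding).val := rfl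
        _ = Finset.univ.val := by rw [this]
    rw [h1, h2]
    have h3 : Multiset.map f Finset.univ.val
        = Multiset.map hA.eigenvalues (Finset.univ.val.map ε) := by
      rw [Multiset.map_map]
    have h4 : (Finset.univ.val.map (ε : Fin _ → V)) = Finset.univ.val := by
      have := Finset.map_univ_equiv ε
      calc Finset.univ.val.map (ε : Fin _ → V)
          = (Finset.univ.map ε.toEmbedding).val := rfl
        _ = Finset.univ.val := by rw [this]
    rw [h3, h4]

/-! ### Quadratic forms via orthonormal eigenbases -/

variable {V : Type*} [Fintype V] [DecidableEq V]

lemma aux_dot_eq_inner (x y : EuclideanSpace ℝ V) :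
    (x : V → ℝ) ⬝ᵥ (y : V → ℝ) = ⟪x, y⟫ := by
  rw [PiLp.inner_apply]
  simp [dotProduct, mul_comm]

lemma aux_quad_form {n : ℕ} (A : Matrix V V ℝ)
    (b : OrthonormalBasis (Fin n) ℝ (EuclideanSpace ℝ V))
    (μ : Fin n → ℝ) (hb : ∀ k, A *ᵥ (b k : V → ℝ) = μ k • (b k : V → ℝ))
    (x : EuclideanSpace ℝ V) :
    (x : V → ℝ) ⬝ᵥ (A *ᵥ (x : V → ℝ)) = ∑ k, μ k * (b.repr x k)^2 := by
  have hx : (x : V → ℝ) = ∑ k, b.repr x k • (b k : V → ℝ) := by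
    have := congrArg WithLp.ofLp (b.sum_repr x).symm; simpa using this
  have hAx : (A *ᵥ (x : V → ℝ)) = ∑ k, b.repr x k • (μ k • (b k : V → ℝ)) := by
    conv_lhs => rw [hx]
    rw [← A.mulVecLin_apply, map_sum]
    refine Finset.sum_congr rfl fun k _ => ?_
    rw [LinearMap.map_smul, A.mulVecLin_apply, hb k]
  have key : (x : V → ℝ) ⬝ᵥ (A *ᵥ (x : V → ℝ))
      = ⟪x, (∑ k, b.repr x k • (μ k • b k) : EuclideanSpace ℝ V)⟫ := by
    rw [← aux_dot_eq_inner]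
    exact congrArg _ (hAx.trans (by simp))
  rw [key, inner_sum]
  refine Finset.sum_congr rfl fun k _ => ?_
  rw [real_inner_smul_right, real_inner_smul_right, real_inner_comm, ← b.repr_apply_apply]
  ring

lemma aux_norm_form {n : ℕ} (b : OrthonormalBasis (Fin n) ℝ (EuclideanSpace ℝ V))
    (x : EuclideanSpace ℝ V) :
    (x : V → ℝ) ⬝ᵥ (x : V → ℝ) = ∑ k, (b.repr x k)^2 := by
  have := aux_quad_form (1 : Matrix V V ℝ) b (fun _ => 1) (fun k => by simp) x
  simpa using this

/-! ### Weyl-type eigenvalue monotonicity -/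

lemma aux_eig_mono (A B : Matrix V V ℝ) (hPSD : (B - A).PosSemidef)
    (μ ν : Fin (Fintype.card V) → ℝ)
    (bA bB : OrthonormalBasis (Fin (Fintype.card V)) ℝ (EuclideanSpace ℝ V))
    (hμ : Antitone μ) (hν : Antitone ν)
    (hbA : ∀ k, A *ᵥ (bA k : V → ℝ) = μ k • (bA k : V → ℝ))
    (hbB : ∀ k, B *ᵥ (bB k : V → ℝ) = ν k • (bB k : V → ℝ))
    (i : Fin (Fintype.card V)) : μ i ≤ ν i := by
  classical
  let n := Fintype.card V
  let L : EuclideanSpace ℝ V →ₗ[ℝ] ({k : Fin n // i < k} → ℝ) × ({k : Fin n // k < i} → ℝ) :=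
    { toFun := fun x => (fun k => bA.repr x k.1, fun k => bB.repr x k.1)
      map_add' := by intro x y; simp [Prod.ext_iff]; constructor <;> funext k <;> simp
      map_smul' := by intro c x; simp [Prod.ext_iff]; constructor <;> funext k <;> simp }
  have hcard : Fintype.card {k : Fin n // i < k} + Fintype.card {k : Fin n // k < i} < n := by
    have hinj : Function.Injective
        (fun z : {k : Fin n // i < k} ⊕ {k : Fin n // k < i} =>
          (Sum.elim (fun a => ⟨a.1, (ne_of_lt a.2).symm⟩) (fun a => ⟨a.1, ne_of_lt a.2⟩) z :
            {k : Fin n // k ≠ i})) := by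
      rintro (a | a) (b | b) h <;> simp only [Sum.elim_inl, Sum.elim_inr, Subtype.mk.injEq] at h
      · exact congrArg Sum.inl (Subtype.ext h)
      · exact (lt_asymm (h ▸ a.2) b.2).elim
      · exact (lt_asymm a.2 (h ▸ b.2)).elim
      · exact congrArg Sum.inr (Subtype.ext h)
    have := Fintype.card_le_of_injective _ hinj
    rw [Fintype.card_sum] at this
    have h2 : Fintype.card {k : Fin n // k ≠ i} < n := by
      have := Fintype.card_subtype_compl (fun k : Fin n => k = i)
      rw [Fintype.card_subtype_eq, Fintype.card_fin] at this
      simp only [ne_eq]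
      have hi := i.2
      omega
    omega
  have hker : LinearMap.ker L ≠ ⊥ := by
    intro hbot
    have hinj : Function.Injective L := by
      rw [← LinearMap.ker_eq_bot]; exact hbot
    have hle := LinearMap.finrank_le_finrank_of_injective hinj
    rw [finrank_euclideanSpace] at hle
    rw [Module.finrank_prod, Module.finrank_pi, Module.finrank_pi] at hle
    omega
  obtain ⟨x, hxmem, hx0⟩ := Submodule.exists_mem_ne_zero_of_ne_bot hker
  rw [LinearMap.mem_ker] at hxmem
  have hA0 : ∀ k : Fin n, i < k → bA.repr x k = 0 := by
    intro k hk
    exact congrFun (congrArg Prod.fst hxmem) ⟨k, hk⟩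
  have hB0 : ∀ k : Fin n, k < i → bB.repr x k = 0 := by
    intro k hk
    exact congrFun (congrArg Prod.snd hxmem) ⟨k, hk⟩
  have hxx : (0:ℝ) < (x : V → ℝ) ⬝ᵥ (x : V → ℝ) := by
    rcases lt_or_eq_of_le (by simpa using dotProduct_self_star_nonneg (x : V → ℝ)) with h | h
    · exact h
    · exact absurd (dotProduct_self_eq_zero.mp h.symm)
        (fun h0 => hx0 (by ext j; simpa using congrFun h0 j))
  have h1 : μ i * ((x : V → ℝ) ⬝ᵥ (x : V → ℝ)) ≤ (x : V → ℝ) ⬝ᵥ (A *ᵥ (x : V → ℝ)) := by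
    rw [aux_quad_form A bA μ hbA x, aux_norm_form bA x, Finset.mul_sum]
    refine Finset.sum_le_sum fun k _ => ?_
    by_cases hk : i < k
    · rw [hA0 k hk]; simp
    · exact mul_le_mul_of_nonneg_right (hμ (not_lt.mp hk)) (sq_nonneg _)
  have h3 : (x : V → ℝ) ⬝ᵥ (B *ᵥ (x : V → ℝ)) ≤ ν i * ((x : V → ℝ) ⬝ᵥ (x : V → ℝ)) := by
    rw [aux_quad_form B bB ν hbB x, aux_norm_form bB x, Finset.mul_sum]
    refine Finset.sum_le_sum fun k _ => ?_
    by_cases hk : k < i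
    · rw [hB0 k hk]; simp
    · exact mul_le_mul_of_nonneg_right (hν (not_lt.mp hk)) (sq_nonneg _)
  have h2 : (x : V → ℝ) ⬝ᵥ (A *ᵥ (x : V → ℝ)) ≤ (x : V → ℝ) ⬝ᵥ (B *ᵥ (x : V → ℝ)) := by
    have := hPSD.dotProduct_mulVec_nonneg (x : V → ℝ)
    rw [Matrix.sub_mulVec, dotProduct_sub] at this
    simp only [star_trivial] at this
    linarith
  nlinarith [h1, h2, h3, hxx]

/-! ### Positive semidefiniteness of Laplacian-type matrices -/

lemma aux_psd_lap (b : Matrix V V ℝ) (hsym : ∀ i j, b j i = b i j) (hpos : ∀ i j, 0 ≤ b i j) :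
    Matrix.PosSemidef (Matrix.diagonal (fun i => ∑ j, b i j) - b) := by
  refine Matrix.PosSemidef.of_dotProduct_mulVec_nonneg ?_ ?_
  · ext i j
    simp only [Matrix.conjTranspose_apply, Matrix.sub_apply, star_trivial]
    by_cases h : i = j
    · subst h; rfl
    · rw [Matrix.diagonal_apply_ne _ h, Matrix.diagonal_apply_ne _ (Ne.symm h), hsym i j]
  · intro x
    have hs : star x = x := by funext i; exact star_trivial _
    rw [hs]
    set Q := x ⬝ᵥ ((Matrix.diagonal (fun i => ∑ j, b i j) - b) *ᵥ x) with hQ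
    have hQeq : Q = ∑ i, ∑ j, (b i j * x i ^ 2 - b i j * (x i * x j)) := by
      rw [hQ]
      simp only [dotProduct, Matrix.mulVec, Matrix.sub_apply, Matrix.diagonal_apply,
        dotProduct]
      refine Finset.sum_congr rfl fun i _ => ?_
      rw [show (∑ j, ((if i = j then ∑ k, b i k else 0) - b i j) * x j)
          = (∑ j, (if i = j then (∑ k, b i k) * x j else 0)) - ∑ j, b i j * x j from by
        rw [← Finset.sum_sub_distrib]
        refine Finset.sum_congr rfl fun j _ => ?_
        by_cases h : i = j <;> simp [h, sub_mul]]
      rw [Finset.sum_ite_eq Finset.univ i fun j => (∑ k, b i k) * x j]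
      simp only [Finset.mem_univ, if_true]
      rw [Finset.sum_mul, mul_sub, Finset.mul_sum, Finset.mul_sum]
      rw [← Finset.sum_sub_distrib]
      refine Finset.sum_congr rfl fun j _ => ?_
      ring
    have hswap : ∑ i, ∑ j, b i j * x j ^ 2 = ∑ i, ∑ j, b i j * x i ^ 2 := by
      rw [Finset.sum_comm]
      refine Finset.sum_congr rfl fun i _ => Finset.sum_congr rfl fun j _ => ?_
      rw [hsym]
    have hkey : ∑ i, ∑ j, b i j * (x i - x j) ^ 2 = 2 * Q := by
      have expand : ∑ i, ∑ j, b i j * (x i - x j) ^ 2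
          = ∑ i, ∑ j, (b i j * x i ^ 2 + b i j * x j ^ 2 - 2 * (b i j * (x i * x j))) := by
        refine Finset.sum_congr rfl fun i _ => Finset.sum_congr rfl fun j _ => ?_
        ring
      rw [expand]
      simp only [Finset.sum_sub_distrib, Finset.sum_add_distrib, ← Finset.mul_sum]
      rw [hswap, hQeq]
      simp only [Finset.sum_sub_distrib, ← Finset.mul_sum]
      ring
    have hnn : 0 ≤ ∑ i, ∑ j, b i j * (x i - x j) ^ 2 :=
      Finset.sum_nonneg fun i _ => Finset.sum_nonneg fun j _ =>
        mul_nonneg (hpos i j) (sq_nonneg _)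
    linarith [hkey ▸ hnn]

/-! ### Graph-specific facts -/

lemma aux_RD_symm (G : SimpleGraph V) (i j : V) : RD G j i = RD G i j := by
  unfold RD
  by_cases h : i = j
  · subst h; simp
  · rw [if_neg h, if_neg (Ne.symm h), SimpleGraph.dist_comm]

lemma aux_RDL_herm (G : SimpleGraph V) : (RDL G).IsHermitian := by
  ext i j
  simp only [Matrix.conjTranspose_apply, RDL, Matrix.sub_apply, star_trivial]
  by_cases h : i = j
  · subst h; rfl
  · rw [Matrix.diagonal_apply_ne _ h, Matrix.diagonal_apply_ne _ (Ne.symm h), aux_RD_symm]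

lemma aux_RDL_diff (G G' : SimpleGraph V) :
    RDL G' - RDL G = Matrix.diagonal (fun i => ∑ j, (RD G' - RD G) i j) - (RD G' - RD G) := by
  ext i j
  by_cases h : i = j
  · subst h
    simp only [RDL, Matrix.sub_apply, Matrix.diagonal_apply_eq, RTr, Matrix.sub_apply,
      Finset.sum_sub_distrib]
    ring
  · simp only [RDL, Matrix.sub_apply, Matrix.diagonal_apply_ne _ h]
    ring

lemma aux_RD_diff_nonneg (G G' : SimpleGraph V) (hc : G.Connected) (hle : G ≤ G') (i j : V) :
    0 ≤ (RD G' - RD G) i j := by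
  rcases eq_or_ne i j with h | h
  · subst h; simp [RD]
  · have hc' : G'.Connected := hc.mono hle
    have hd'pos : 0 < G'.dist i j := hc'.pos_dist_of_ne h
    have hdle : G'.dist i j ≤ G.dist i j := ((hc i j).dist_anti hle)
    simp only [Matrix.sub_apply, RD, if_neg h]
    have h1 : (0:ℝ) < (G'.dist i j : ℝ) := by exact_mod_cast hd'pos
    have h2 : ((G'.dist i j : ℝ)) ≤ (G.dist i j : ℝ) := by exact_mod_cast hdle
    have := inv_anti₀ h1 h2
    linarith

end Auxiliary

theorem stmt2 {V : Type*} [Fintype V] [DecidableEq V] (G G' : SimpleGraph V)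
    (hc : G.Connected) (u v : V) (huv : u ≠ v) (hne : ¬ G.Adj u v)
    (hG' : G' = G ⊔ SimpleGraph.fromEdgeSet {s(u, v)})
    (e e' : Fin (Fintype.card V) → ℝ)
    (he : IsEigEnum (RDL G) e) (he' : IsEigEnum (RDL G') e') :
    ∀ i, e i ≤ e' i := by
  intro i
  have hle : G ≤ G' := hG' ▸ le_sup_left
  have hPSD : (RDL G' - RDL G).PosSemidef := by
    rw [aux_RDL_diff G G']
    exact aux_psd_lap _ (fun a b => by rw [Matrix.sub_apply, Matrix.sub_apply,
        aux_RD_symm G' a b, aux_RD_symm G a b]) (aux_RD_diff_nonneg G G' hc hle)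
  obtain ⟨μ, bA, hμa, hμe, hμr⟩ := aux_exists_sorted_eigen (RDL G) (aux_RDL_herm G)
  obtain ⟨ν, bB, hνa, hνe, hνr⟩ := aux_exists_sorted_eigen (RDL G') (aux_RDL_herm G')
  have heμ : e = μ := aux_eig_enum_unique e μ he.1 hμa (he.2.trans hμr.symm)
  have heν : e' = ν := aux_eig_enum_unique e' ν he'.1 hνa (he'.2.trans hνr.symm)
  rw [heμ, heν]
  exact aux_eig_mono (RDL G) (RDL G') hPSD μ ν bA bB hμa hνa hμe hνe i
end

section
/- Let G be a connected graph on n vertices. Then λ_{n-1}(RD^L(G)) ≤ n, with equality if and only if G is the complete graph K_n. -/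
open Matrix Polynomial

section Aux

variable {V : Type*} [Fintype V] [DecidableEq V]

lemma RD_self (G : SimpleGraph V) (v : V) : RD G v v = 0 := by simp [RD]

lemma RD_symm (G : SimpleGraph V) (u v : V) : RD G u v = RD G v u := by
  unfold RD
  by_cases h : u = v
  · simp [h]
  · rw [if_neg h, if_neg (Ne.symm h), SimpleGraph.dist_comm]

lemma RD_nonneg (G : SimpleGraph V) (u v : V) : 0 ≤ RD G u v := by
  unfold RD
  split
  · exact le_rfl
  · positivity

lemma RD_le_one (G : SimpleGraph V) (u v : V) : RD G u v ≤ 1 := by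
  unfold RD
  split
  · norm_num
  · rcases Nat.eq_zero_or_pos (G.dist u v) with h | h
    · simp [h]
    · have h1 : (1 : ℝ) ≤ (G.dist u v : ℝ) := by exact_mod_cast h
      calc ((G.dist u v : ℝ))⁻¹ ≤ 1⁻¹ := by
            apply inv_anti₀ <;> norm_num
            omega
        _ = 1 := by norm_num

lemma sum_ite_off (v : V) :
    ∑ u, (if v = u then (0 : ℝ) else 1) = (Fintype.card V : ℝ) - 1 := by
  have h : ∀ u, (if v = u then (0:ℝ) else 1) = 1 - (if v = u then 1 else 0) := by
    intro u; split <;> ring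
  simp_rw [h]
  rw [Finset.sum_sub_distrib, Finset.sum_const, Finset.sum_ite_eq]
  simp [Finset.card_univ]

lemma RTr_le (G : SimpleGraph V) (v : V) : RTr G v ≤ (Fintype.card V : ℝ) - 1 := by
  rw [RTr, ← sum_ite_off v]
  apply Finset.sum_le_sum
  intro u _
  by_cases h : v = u
  · simp [h, RD_self]
  · rw [if_neg h]; exact RD_le_one G v u

lemma trace_RDL (G : SimpleGraph V) : (RDL G).trace = ∑ v, RTr G v := by
  simp [Matrix.trace, Matrix.diag, RDL, Matrix.sub_apply, RD_self]

lemma mulVec_RDL (G : SimpleGraph V) (x : V → ℝ) (u : V) :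
    (RDL G *ᵥ x) u = RTr G u * x u - ∑ v, RD G u v * x v := by
  rw [RDL, Matrix.sub_mulVec]
  simp only [Pi.sub_apply, Matrix.mulVec_diagonal]
  rfl

lemma quad_eq (G : SimpleGraph V) (x : V → ℝ) :
    x ⬝ᵥ (RDL G *ᵥ x) = (∑ u, ∑ v, RD G u v * (x u - x v) ^ 2) / 2 := by
  have hA : ∀ u, RTr G u * x u ^ 2 = ∑ v, RD G u v * x u ^ 2 := by
    intro u
    rw [RTr, Finset.sum_mul]
  have step1 : x ⬝ᵥ (RDL G *ᵥ x)
      = (∑ u, ∑ v, RD G u v * x u ^ 2) - ∑ u, ∑ v, RD G u v * x u * x v := by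
    rw [dotProduct, ← Finset.sum_sub_distrib]
    refine Finset.sum_congr rfl fun u _ => ?_
    rw [mulVec_RDL, ← hA]
    have h2 : x u * ∑ v, RD G u v * x v = ∑ v, RD G u v * x u * x v := by
      rw [Finset.mul_sum]
      exact Finset.sum_congr rfl fun v _ => by ring
    rw [mul_sub, h2]
    congr 1
    ring
  have hB : ∑ u, ∑ v, RD G u v * x v ^ 2 = ∑ u, ∑ v, RD G u v * x u ^ 2 := by
    rw [Finset.sum_comm]
    exact Finset.sum_congr rfl fun u _ => Finset.sum_congr rfl fun v _ => by rw [RD_symm]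
  have expand : ∀ u v : V, RD G u v * (x u - x v) ^ 2
      = RD G u v * x u ^ 2 + RD G u v * x v ^ 2 - 2 * (RD G u v * x u * x v) := by
    intro u v; ring
  rw [step1]
  simp_rw [expand, Finset.sum_sub_distrib, Finset.sum_add_distrib, ← Finset.mul_sum, hB]
  ring

lemma quad_nonneg (G : SimpleGraph V) (x : V → ℝ) : 0 ≤ x ⬝ᵥ (RDL G *ᵥ x) := by
  rw [quad_eq]
  apply div_nonneg _ (by norm_num)
  refine Finset.sum_nonneg fun u _ => Finset.sum_nonneg fun v _ => ?_
  exact mul_nonneg (RD_nonneg G u v) (sq_nonneg _)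

lemma charpoly_eval (M : Matrix V V ℝ) (t : ℝ) :
    M.charpoly.eval t = (t • (1 : Matrix V V ℝ) - M).det := by
  rw [Matrix.charpoly, ← Polynomial.coe_evalRingHom, RingHom.map_det]
  congr 1
  ext i j
  by_cases h : i = j
  · subst h
    simp [Matrix.charmatrix_apply_eq, Matrix.sub_apply, Matrix.smul_apply, Matrix.one_apply]
  · simp [Matrix.charmatrix_apply_ne _ _ _ h, Matrix.sub_apply, Matrix.smul_apply,
      Matrix.one_apply_ne h]

lemma root_nonneg (G : SimpleGraph V) :
    ∀ t ∈ (RDL G).charpoly.roots, 0 ≤ t := by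
  intro t ht
  have hroot : (RDL G).charpoly.eval t = 0 :=
    Polynomial.isRoot_of_mem_roots ht
  rw [charpoly_eval] at hroot
  obtain ⟨x, hx0, hx⟩ := Matrix.exists_mulVec_eq_zero_iff.mpr hroot
  have hev : RDL G *ᵥ x = t • x := by
    rw [Matrix.sub_mulVec, sub_eq_zero] at hx
    rw [← hx, Matrix.smul_mulVec, Matrix.one_mulVec]
  have h1 : x ⬝ᵥ (RDL G *ᵥ x) = t * (x ⬝ᵥ x) := by
    rw [hev, dotProduct_smul, smul_eq_mul]
  have h2 : 0 < x ⬝ᵥ x := by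
    have hnn : 0 ≤ x ⬝ᵥ x :=
      Finset.sum_nonneg fun i _ => mul_self_nonneg _
    rcases lt_or_eq_of_le hnn with h | h
    · exact h
    · exact absurd (dotProduct_self_eq_zero.mp h.symm) hx0
  nlinarith [quad_nonneg G x, h1]

end Aux

theorem stmt5 {V : Type*} [Fintype V] [DecidableEq V] (G : SimpleGraph V)
    (hc : G.Connected) (hn : 2 ≤ Fintype.card V)
    (e : Fin (Fintype.card V) → ℝ) (he : IsEigEnum (RDL G) e) :
    ∀ i : Fin (Fintype.card V), (i : ℕ) = Fintype.card V - 2 →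
      e i ≤ (Fintype.card V : ℝ) ∧
        (e i = (Fintype.card V : ℝ) ↔ G = (⊤ : SimpleGraph V)) := by
  intro i hi
  have hN2 : (2 : ℝ) ≤ (Fintype.card V : ℝ) := by exact_mod_cast hn
  have hl' : Fintype.card V - 1 < Fintype.card V := by omega
  set l : Fin (Fintype.card V) := ⟨Fintype.card V - 1, hl'⟩ with hldef
  have hlval : (l : ℕ) = Fintype.card V - 1 := rfl
  have hil : i ≤ l := by
    rw [Fin.le_def, hi, hlval]; omega
  have hinel : i ≠ l := by
    intro h
    have h2 := congrArg Fin.val h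
    rw [hi, hlval] at h2
    omega
  have hlen : Multiset.card (RDL G).charpoly.roots = Fintype.card V := by
    rw [← he.2, Multiset.coe_card, List.length_ofFn]
  have hsplits : ((RDL G).charpoly).Splits :=
    Polynomial.splits_iff_card_roots.mpr
      (by rw [hlen, Matrix.charpoly_natDegree_eq_dim])
  have htr : (RDL G).trace = ∑ j, e j := by
    rw [Matrix.trace_eq_sum_roots_charpoly_of_splits hsplits, ← he.2]
    rw [Multiset.sum_coe, List.sum_ofFn]
  have htr_le : (RDL G).trace ≤ (Fintype.card V : ℝ) * ((Fintype.card V : ℝ) - 1) := by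
    rw [trace_RDL]
    calc ∑ v, RTr G v ≤ ∑ _v : V, ((Fintype.card V : ℝ) - 1) :=
          Finset.sum_le_sum fun v _ => RTr_le G v
      _ = (Fintype.card V : ℝ) * ((Fintype.card V : ℝ) - 1) := by
          rw [Finset.sum_const, Finset.card_univ, nsmul_eq_mul]
  have hmem : ∀ j : Fin (Fintype.card V), e j ∈ (RDL G).charpoly.roots := by
    intro j
    rw [← he.2]
    exact Multiset.mem_coe.mpr (List.mem_ofFn.mpr ⟨j, rfl⟩)
  have hel : 0 ≤ e l := root_nonneg G _ (hmem l)
  have hji : ∀ j : Fin (Fintype.card V), j ≠ l → e i ≤ e j := by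
    intro j hj
    apply he.1
    have hjne : (j : ℕ) ≠ Fintype.card V - 1 := by
      intro hh
      exact hj (Fin.ext (by rw [hh, hlval]))
    have hjlt := j.isLt
    rw [Fin.le_def, hi]
    omega
  have hcard_erase : (Finset.univ.erase l).card = Fintype.card V - 1 := by
    rw [Finset.card_erase_of_mem (Finset.mem_univ l), Finset.card_univ, Fintype.card_fin]
  have hcast : ((Fintype.card V - 1 : ℕ) : ℝ) = (Fintype.card V : ℝ) - 1 := by
    push_cast [Nat.cast_sub (by omega : 1 ≤ Fintype.card V)]; ring
  have hsum_ge : ((Fintype.card V : ℝ) - 1) * e i + e l ≤ ∑ j, e j := by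
    rw [← Finset.sum_erase_add Finset.univ e (Finset.mem_univ l)]
    have h1 : ((Fintype.card V : ℝ) - 1) * e i ≤ ∑ j ∈ Finset.univ.erase l, e j := by
      have h2 := Finset.card_nsmul_le_sum (Finset.univ.erase l) e (e i)
        (fun j hj => hji j (Finset.ne_of_mem_erase hj))
      rw [hcard_erase, nsmul_eq_mul, hcast] at h2
      exact h2
    linarith
  have hub : e i ≤ (Fintype.card V : ℝ) := by
    have h1 : ((Fintype.card V : ℝ) - 1) * e i
        ≤ (Fintype.card V : ℝ) * ((Fintype.card V : ℝ) - 1) := by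
      rw [htr] at htr_le
      linarith
    nlinarith
  refine ⟨hub, ?_, ?_⟩
  · -- equality implies complete
    intro heqi
    have htr_eq : (RDL G).trace = (Fintype.card V : ℝ) * ((Fintype.card V : ℝ) - 1) := by
      rw [heqi] at hsum_ge
      rw [htr]
      nlinarith [htr_le, htr]
    have htr_eq' : ∑ v, RTr G v = (Fintype.card V : ℝ) * ((Fintype.card V : ℝ) - 1) := by
      rw [← trace_RDL, htr_eq]
    have hRTr : ∀ v : V, RTr G v = (Fintype.card V : ℝ) - 1 := by
      have hsum : ∑ v, RTr G v = ∑ _v : V, ((Fintype.card V : ℝ) - 1) := by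
        rw [htr_eq', Finset.sum_const, Finset.card_univ, nsmul_eq_mul]
      have h2 := (Finset.sum_eq_sum_iff_of_le (fun v _ => RTr_le G v)).mp hsum
      intro v; exact h2 v (Finset.mem_univ v)
    have hadj : ∀ u v : V, u ≠ v → G.Adj u v := by
      intro u v huv
      have hsum : ∑ w, RD G u w = ∑ w, (if u = w then (0:ℝ) else 1) := by
        rw [← RTr, hRTr u, sum_ite_off]
      have hle : ∀ w ∈ Finset.univ, RD G u w ≤ (if u = w then (0:ℝ) else 1) := by
        intro w _
        by_cases h : u = w
        · simp [h, RD_self]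
        · rw [if_neg h]; exact RD_le_one G u w
      have hptw := (Finset.sum_eq_sum_iff_of_le hle).mp hsum v (Finset.mem_univ v)
      rw [if_neg huv] at hptw
      rw [RD, if_neg huv, inv_eq_one] at hptw
      have hd1 : G.dist u v = 1 := by exact_mod_cast hptw
      exact SimpleGraph.dist_eq_one_iff_adj.mp hd1
    ext u v
    rw [SimpleGraph.top_adj]
    exact ⟨fun h => h.ne, fun h => hadj u v h⟩
  · -- complete implies equality
    intro hG
    subst hG
    have hRD : ∀ a b : V, RD (⊤ : SimpleGraph V) a b = if a = b then 0 else 1 := by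
      intro a b
      rw [RD]
      by_cases h : a = b
      · simp [h]
      · rw [if_neg h, if_neg h, SimpleGraph.dist_eq_one_iff_adj.mpr
          ((SimpleGraph.top_adj a b).mpr h)]
        norm_num
    have hRTr : ∀ a : V, RTr (⊤ : SimpleGraph V) a = (Fintype.card V : ℝ) - 1 := by
      intro a
      rw [RTr]
      simp_rw [hRD]
      exact sum_ite_off a
    have hRDL : ∀ a b : V, RDL (⊤ : SimpleGraph V) a b
        = if a = b then (Fintype.card V : ℝ) - 1 else -1 := by
      intro a b
      rw [RDL, Matrix.sub_apply, Matrix.diagonal_apply, hRD]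
      by_cases h : a = b <;> simp [h, hRTr]
    have hJdet : ∀ a : ℝ, a ≠ 0 →
        ((a • (1 : Matrix V V ℝ) + Matrix.of fun _ _ => (1:ℝ))).det
          = a ^ (Fintype.card V - 1) * (a + (Fintype.card V : ℝ)) := by
      intro a ha
      have heq2 : a • (1 : Matrix V V ℝ) + Matrix.of (fun _ _ => (1:ℝ))
          = a • ((1 : Matrix V V ℝ)
            + Matrix.replicateCol Unit (fun _ : V => a⁻¹) * Matrix.replicateRow Unit (fun _ : V => (1:ℝ))) := by
        ext u v
        rw [Matrix.add_apply, Matrix.smul_apply, Matrix.smul_apply, Matrix.add_apply,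
          Matrix.of_apply, Matrix.mul_apply]
        rw [Finset.univ_unique, Finset.sum_singleton, Matrix.replicateCol_apply, Matrix.replicateRow_apply]
        by_cases h : u = v
        · subst h
          rw [Matrix.one_apply_eq]
          simp only [smul_eq_mul]
          field_simp
        · rw [Matrix.one_apply_ne h]
          simp only [smul_eq_mul]
          field_simp
      rw [heq2, Matrix.det_smul, Matrix.det_one_add_replicateCol_mul_replicateRow]
      have hdp : (fun _ : V => (1:ℝ)) ⬝ᵥ (fun _ : V => a⁻¹) = (Fintype.card V : ℝ) * a⁻¹ := by
        simp [dotProduct, Finset.card_univ]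
      rw [hdp]
      have hpow : a ^ Fintype.card V = a ^ (Fintype.card V - 1) * a := by
        rw [← pow_succ]
        congr 1
        omega
      rw [hpow]
      field_simp
    have hJ0 : (Matrix.of (fun _ _ => (1:ℝ)) : Matrix V V ℝ).det = 0 := by
      obtain ⟨u0, v0, huv⟩ := Fintype.exists_pair_of_one_lt_card
        (show 1 < Fintype.card V by omega)
      apply Matrix.exists_mulVec_eq_zero_iff.mp
      refine ⟨(fun w => (if w = u0 then (1:ℝ) else 0) + (if w = v0 then (-1:ℝ) else 0)),
        ?_, ?_⟩
      · intro h
        have h2 := congrFun h u0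
        simp [huv] at h2
      · funext w
        simp only [Matrix.mulVec, dotProduct, Matrix.of_apply, one_mul, Pi.zero_apply]
        rw [Finset.sum_add_distrib, Finset.sum_ite_eq', Finset.sum_ite_eq']
        simp
    have hchar : (RDL (⊤ : SimpleGraph V)).charpoly
        = X * (X - C ((Fintype.card V : ℝ))) ^ (Fintype.card V - 1) := by
      apply Polynomial.funext
      intro t
      rw [charpoly_eval]
      have hmat : t • (1 : Matrix V V ℝ) - RDL (⊤ : SimpleGraph V)
          = (t - (Fintype.card V : ℝ)) • (1 : Matrix V V ℝ)
            + Matrix.of (fun _ _ => (1:ℝ)) := by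
        ext u v
        rw [Matrix.sub_apply, Matrix.add_apply, Matrix.smul_apply, Matrix.smul_apply,
          Matrix.of_apply, hRDL]
        by_cases h : u = v
        · subst h
          rw [Matrix.one_apply_eq, if_pos rfl]
          simp only [smul_eq_mul]
          ring
        · rw [Matrix.one_apply_ne h, if_neg h]
          simp only [smul_eq_mul]
          ring
      rw [hmat]
      simp only [eval_mul, eval_pow, eval_sub, eval_X, eval_C]
      by_cases h : t = (Fintype.card V : ℝ)
      · rw [h, sub_self, zero_smul, zero_add, hJ0]
        rw [zero_pow (show Fintype.card V - 1 ≠ 0 by omega)]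
        ring
      · rw [hJdet (t - (Fintype.card V : ℝ)) (sub_ne_zero.mpr h)]
        ring
    have hroots : (RDL (⊤ : SimpleGraph V)).charpoly.roots
        = 0 ::ₘ Multiset.replicate (Fintype.card V - 1) ((Fintype.card V : ℝ)) := by
      rw [hchar, Polynomial.roots_mul
        ((Polynomial.monic_X.mul ((Polynomial.monic_X_sub_C _).pow _)).ne_zero),
        Polynomial.roots_X, Polynomial.roots_pow, Polynomial.roots_X_sub_C,
        Multiset.nsmul_singleton, Multiset.singleton_add]
    have hlist : (↑(List.ofFn e) : Multiset ℝ)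
        = 0 ::ₘ Multiset.replicate (Fintype.card V - 1) ((Fintype.card V : ℝ)) := by
      rw [he.2, hroots]
    have hmem2 : ∀ j : Fin (Fintype.card V), e j = 0 ∨ e j = (Fintype.card V : ℝ) := by
      intro j
      have h2 : e j ∈ (↑(List.ofFn e) : Multiset ℝ) :=
        Multiset.mem_coe.mpr (List.mem_ofFn.mpr ⟨j, rfl⟩)
      rw [hlist] at h2
      rcases Multiset.mem_cons.mp h2 with h | h
      · exact Or.inl h
      · exact Or.inr (Multiset.eq_of_mem_replicate h)
    have hsumE : ∑ j, e j = ((Fintype.card V : ℝ) - 1) * (Fintype.card V : ℝ) := by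
      have h2 : (↑(List.ofFn e) : Multiset ℝ).sum = ∑ j, e j := by
        rw [Multiset.sum_coe, List.sum_ofFn]
      rw [← h2, hlist, Multiset.sum_cons, Multiset.sum_replicate, nsmul_eq_mul, hcast]
      ring
    rcases hmem2 i with h0 | hN
    · exfalso
      have hl0 : e l = 0 := by
        rcases hmem2 l with h | h
        · exact h
        · exfalso
          have h3 : e l ≤ e i := he.1 hil
          rw [h, h0] at h3
          linarith
      have hmeml : l ∈ Finset.univ.erase i :=
        Finset.mem_erase.mpr ⟨Ne.symm hinel, Finset.mem_univ l⟩
      have hsplit : ∑ j, e j = e i + (e l + ∑ j ∈ (Finset.univ.erase i).erase l, e j) := by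
        rw [Finset.add_sum_erase _ e hmeml, Finset.add_sum_erase _ e (Finset.mem_univ i)]
      have hble : ∑ j ∈ (Finset.univ.erase i).erase l, e j
          ≤ ((Finset.univ.erase i).erase l).card • (Fintype.card V : ℝ) := by
        apply Finset.sum_le_card_nsmul
        intro j _
        rcases hmem2 j with h | h
        · rw [h]; linarith
        · rw [h]
      have hcard2 : ((Finset.univ.erase i).erase l).card = Fintype.card V - 2 := by
        rw [Finset.card_erase_of_mem hmeml,
          Finset.card_erase_of_mem (Finset.mem_univ i), Finset.card_univ, Fintype.card_fin]
        omega
      rw [hcard2, nsmul_eq_mul] at hble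
      have hcast2 : ((Fintype.card V - 2 : ℕ) : ℝ) = (Fintype.card V : ℝ) - 2 := by
        push_cast [Nat.cast_sub (by omega : 2 ≤ Fintype.card V)]; ring
      rw [hcast2] at hble
      rw [hsplit, h0, hl0] at hsumE
      nlinarith
    · exact hN
end

section
/- Let G be a connected graph on n vertices with G ≇ K_n, and let D = {v ∈ V(G) : deg_G(v) = n−1} be the set of dominating vertices. Then n is an eigenvalue of RD^L(G) with multiplicity at least |D|. -/
open Matrix Polynomial

/-! ### Auxiliary lemmas -/

lemma charpoly_diagonal_aux {V : Type*} [Fintype V] [DecidableEq V] (d : V → ℝ) :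
    (Matrix.diagonal d).charpoly = ∏ i, (X - C (d i)) := by
  have h : charmatrix (Matrix.diagonal d) = Matrix.diagonal (fun i => X - C (d i)) := by
    ext i j
    by_cases h : i = j
    · subst h; simp [charmatrix_apply_eq]
    · simp [charmatrix_apply_ne _ _ _ h, Matrix.diagonal_apply_ne _ h,
        Matrix.diagonal_apply_ne d h]
  rw [Matrix.charpoly, h, Matrix.det_diagonal]

lemma charpoly_herm {V : Type*} [Fintype V] [DecidableEq V] (A : Matrix V V ℝ)
    (hA : A.IsHermitian) : A.charpoly = ∏ i, (X - C (hA.eigenvalues i)) := by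
  set b := hA.eigenvectorBasis.toBasis
  have hdiag : LinearMap.toMatrix b b (Matrix.toEuclideanLin A)
      = Matrix.diagonal hA.eigenvalues := by
    ext i j
    rw [LinearMap.toMatrix_apply]
    have hbj : Matrix.toEuclideanLin A (b j) = hA.eigenvalues j • b j := by
      change WithLp.toLp 2 (A *ᵥ WithLp.ofLp (hA.eigenvectorBasis j)) = _
      rw [hA.mulVec_eigenvectorBasis j]; rfl
    rw [hbj, _root_.map_smul]
    simp [b, Matrix.diagonal_apply, Finsupp.single_apply, eq_comm]
    rcases eq_or_ne i j with rfl | h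
    · rfl
    · simp [h]
  have h1 : (Matrix.toEuclideanLin A).charpoly = A.charpoly := by
    conv_rhs => rw [← LinearMap.toMatrix_toLin (PiLp.basisFun 2 ℝ V) (PiLp.basisFun 2 ℝ V) A]
    rw [LinearMap.charpoly_toMatrix, Matrix.toEuclideanLin_eq_toLin]
  rw [← h1, ← LinearMap.charpoly_toMatrix (Matrix.toEuclideanLin A) b, hdiag,
    charpoly_diagonal_aux]

lemma count_roots_herm {V : Type*} [Fintype V] [DecidableEq V] (A : Matrix V V ℝ)
    (hA : A.IsHermitian) (t : ℝ) :
    Multiset.count t A.charpoly.roots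
      = (Finset.univ.filter fun i => hA.eigenvalues i = t).card := by
  rw [charpoly_herm A hA]
  have h2 : ∏ i, (X - C (hA.eigenvalues i))
      = ((Finset.univ.val.map hA.eigenvalues).map fun a => X - C a).prod := by
    rw [Multiset.map_map]; rfl
  rw [h2, roots_multiset_prod_X_sub_C, Multiset.count_map]
  rw [Finset.card_filter]
  simp only [Finset.sum_boole]
  rw [Multiset.filter_congr (fun a _ => by exact eq_comm)]
  rfl

lemma mem_span_eigen {ι E : Type*} [Fintype ι] [DecidableEq ι] [AddCommGroup E] [Module ℝ E]
    (f : E →ₗ[ℝ] E) (b : Module.Basis ι ℝ E) (μ : ι → ℝ) (hb : ∀ i, f (b i) = μ i • b i)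
    (t : ℝ) (x : E) (hx : f x = t • x) :
    x ∈ Submodule.span ℝ (b '' {i | μ i = t}) := by
  have hrepr : ∀ i, μ i ≠ t → b.repr x i = 0 := by
    intro i hi
    have h1 : f x = ∑ j, (b.repr x j * μ j) • b j := by
      conv_lhs => rw [← b.sum_repr x]
      rw [map_sum]
      simp_rw [_root_.map_smul, hb, smul_smul]
    have h2 : b.repr (f x) i = b.repr x i * μ i := by
      rw [h1, map_sum]
      simp [Finsupp.single_apply]
    rw [hx, _root_.map_smul] at h2
    have h3 : t * b.repr x i = b.repr x i * μ i := by simpa using h2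
    have h4 : b.repr x i * (μ i - t) = 0 := by ring_nf; linarith [h3]
    rcases mul_eq_zero.mp h4 with h | h
    · exact h
    · exact absurd (by linarith [sub_eq_zero.mp h]) hi
  rw [show x = ∑ j, b.repr x j • b j from (b.sum_repr x).symm]
  apply Submodule.sum_mem
  intro i _
  by_cases h : μ i = t
  · exact Submodule.smul_mem _ _ (Submodule.subset_span ⟨i, h, rfl⟩)
  · rw [hrepr i h, zero_smul]; exact Submodule.zero_mem _

section Graph
variable {V : Type*} [Fintype V] [DecidableEq V]

lemma dom_adj (G : SimpleGraph V) [DecidableRel G.Adj] {v : V}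
    (hv : G.degree v = Fintype.card V - 1) {u : V} (hu : u ≠ v) : G.Adj v u := by
  have hsub : G.neighborFinset v ⊆ Finset.univ.erase v := by
    intro w hw
    rw [SimpleGraph.mem_neighborFinset] at hw
    exact Finset.mem_erase.mpr ⟨hw.ne', Finset.mem_univ w⟩
  have hcard : (Finset.univ.erase v).card ≤ (G.neighborFinset v).card := by
    rw [Finset.card_erase_of_mem (Finset.mem_univ v), SimpleGraph.card_neighborFinset_eq_degree,
      hv, Finset.card_univ]
  have heq := Finset.eq_of_subset_of_card_le hsub hcard
  rw [← SimpleGraph.mem_neighborFinset, heq]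
  exact Finset.mem_erase.mpr ⟨hu, Finset.mem_univ u⟩

lemma RD_dom (G : SimpleGraph V) [DecidableRel G.Adj] {v : V}
    (hv : G.degree v = Fintype.card V - 1) {u : V} (hu : u ≠ v) :
    RD G v u = 1 ∧ RD G u v = 1 := by
  have hadj := dom_adj G hv hu
  have h1 : G.dist v u = 1 := SimpleGraph.dist_eq_one_iff_adj.mpr hadj
  have h2 : G.dist u v = 1 := by rw [SimpleGraph.dist_comm]; exact h1
  constructor
  · rw [RD]; simp [hu.symm, h1]
  · rw [RD]; simp [hu, h2]

lemma RTr_dom (G : SimpleGraph V) [DecidableRel G.Adj] {v : V}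
    (hv : G.degree v = Fintype.card V - 1) :
    RTr G v = (Fintype.card V : ℝ) - 1 := by
  rw [RTr, ← Finset.sum_erase_add _ _ (Finset.mem_univ v)]
  have h0 : RD G v v = 0 := by rw [RD]; simp
  rw [h0, add_zero, Finset.sum_congr rfl
    (fun u hu => (RD_dom G hv (Finset.mem_erase.mp hu).1).1)]
  rw [Finset.sum_const, Finset.card_erase_of_mem (Finset.mem_univ v), Finset.card_univ]
  have : 1 ≤ Fintype.card V := Fintype.card_pos_iff.mpr ⟨v⟩
  rw [nsmul_eq_mul, mul_one, Nat.cast_sub this, Nat.cast_one]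

/-- The candidate eigenvector attached to a dominating vertex. -/
noncomputable def xvec (V : Type*) [Fintype V] [DecidableEq V] (v : V) : V → ℝ :=
  fun u => if u = v then (Fintype.card V : ℝ) - 1 else -1

lemma RDL_mulVec_xvec (G : SimpleGraph V) [DecidableRel G.Adj] {v : V}
    (hv : G.degree v = Fintype.card V - 1) :
    RDL G *ᵥ xvec V v = (Fintype.card V : ℝ) • xvec V v := by
  funext u
  have hmv : (RD G *ᵥ xvec V v) u = ∑ w, RD G u w * xvec V v w := rfl
  have hRDuu : RD G u u = 0 := by rw [RD]; simp
  have hsplit : ∑ w ∈ Finset.univ.erase v, RD G u w = RTr G u - RD G u v := by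
    have h := Finset.sum_erase_add Finset.univ (fun w => RD G u w) (Finset.mem_univ v)
    have h2 : RTr G u = ∑ w, RD G u w := rfl
    linarith [h, h2 ▸ h]
  have hs2 : ∑ w ∈ Finset.univ.erase v, RD G u w * xvec V v w = -(RTr G u - RD G u v) := by
    rw [Finset.sum_congr rfl (fun w hw => by
      rw [show xvec V v w = -1 from if_neg (Finset.mem_erase.mp hw).1, mul_neg_one])]
    rw [Finset.sum_neg_distrib, hsplit]
  have hsum : (RD G *ᵥ xvec V v) u
      = -(RTr G u - RD G u v) + RD G u v * xvec V v v := by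
    rw [hmv, ← Finset.sum_erase_add _ _ (Finset.mem_univ v), hs2]
  have hxvv : xvec V v v = (Fintype.card V : ℝ) - 1 := if_pos rfl
  have hlhs : (RDL G *ᵥ xvec V v) u
      = RTr G u * xvec V v u - (RD G *ᵥ xvec V v) u := by
    rw [RDL, Matrix.sub_mulVec]
    simp [Matrix.mulVec_diagonal]
  rcases eq_or_ne u v with rfl | huv
  · rw [hlhs, hsum, hxvv, hRDuu, RTr_dom G hv]
    simp only [Pi.smul_apply, hxvv, smul_eq_mul]
    ring
  · have hRD := (RD_dom G hv huv).2
    have hxvu : xvec V v u = -1 := if_neg huv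
    rw [hlhs, hsum, hxvv, hRD, hxvu]
    simp only [Pi.smul_apply, hxvu, smul_eq_mul]
    ring

lemma RDL_isHermitian (G : SimpleGraph V) [DecidableRel G.Adj] :
    (RDL G).IsHermitian := by
  rw [Matrix.IsHermitian]
  ext i j
  rw [Matrix.conjTranspose_apply, star_trivial, RDL]
  simp only [Matrix.sub_apply, Matrix.diagonal_apply]
  rcases eq_or_ne i j with rfl | h
  · rfl
  · rw [if_neg h, if_neg (Ne.symm h), RD, RD]
    simp [h, h.symm, SimpleGraph.dist_comm]

end Graph

theorem stmt6 {V : Type*} [Fintype V] [DecidableEq V] (G : SimpleGraph V) [DecidableRel G.Adj]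
    (hc : G.Connected) (hnc : G ≠ (⊤ : SimpleGraph V)) :
    (Finset.univ.filter fun w => G.degree w = Fintype.card V - 1).card ≤
      Multiset.count ((Fintype.card V : ℝ)) (RDL G).charpoly.roots := by
  classical
  haveI : Nonempty V := hc.nonempty
  have hA : (RDL G).IsHermitian := RDL_isHermitian G
  rw [count_roots_herm (RDL G) hA]
  set μ := hA.eigenvalues with hμ
  set b := hA.eigenvectorBasis.toBasis with hb
  set t : ℝ := (Fintype.card V : ℝ) with ht
  set D := Finset.univ.filter fun w => G.degree w = Fintype.card V - 1 with hD
  set S := Finset.univ.filter fun i => μ i = t with hS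
  set W := Submodule.span ℝ (⇑b '' {i | μ i = t}) with hW
  -- a non-dominating vertex exists
  obtain ⟨u₀, hu₀⟩ : ∃ u, G.degree u ≠ Fintype.card V - 1 := by
    by_contra h; push_neg at h
    apply hnc
    ext a c
    simp only [SimpleGraph.top_adj]
    exact ⟨fun hac => hac.ne, fun hac => dom_adj G (h a) (Ne.symm hac)⟩
  -- the eigenvectors lie in W
  have hmem : ∀ i : {w // w ∈ D},
      (WithLp.equiv 2 (V → ℝ)).symm (xvec V i.1) ∈ W := by
    intro i
    have hdeg : G.degree i.1 = Fintype.card V - 1 := (Finset.mem_filter.mp i.2).2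
    apply mem_span_eigen (Matrix.toEuclideanLin (RDL G)) b μ
      (fun j => by
        change WithLp.toLp 2 (RDL G *ᵥ WithLp.ofLp (hA.eigenvectorBasis j)) = _
        rw [hA.mulVec_eigenvectorBasis j]; rfl) t
    change WithLp.toLp 2 (RDL G *ᵥ xvec V i.1) = _
    rw [RDL_mulVec_xvec G hdeg]
    rfl
  -- linear independence of the eigenvectors
  have hli0 : LinearIndependent ℝ (fun i : {w // w ∈ D} => xvec V i.1) := by
    apply Fintype.linearIndependent_iff.mpr
    intro c hc0 i
    have hev : ∀ u : V, (∑ j, c j • xvec V j.1) u = 0 := fun u => congrFun hc0 u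
    have hsum0 : ∑ j, c j = 0 := by
      have h := hev u₀
      rw [Finset.sum_apply] at h
      simp only [Pi.smul_apply, smul_eq_mul] at h
      have h' : ∀ j ∈ (Finset.univ : Finset {w // w ∈ D}),
          c j * xvec V j.1 u₀ = -c j := by
        intro j _
        have hne : u₀ ≠ j.1 := fun he => hu₀ (he ▸ (Finset.mem_filter.mp j.2).2)
        rw [show xvec V j.1 u₀ = -1 from if_neg hne]
        ring
      rw [Finset.sum_congr rfl h', Finset.sum_neg_distrib] at h
      linarith [h]
    have h := hev i.1
    rw [Finset.sum_apply] at h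
    simp only [Pi.smul_apply, smul_eq_mul] at h
    have h' : ∀ j ∈ (Finset.univ : Finset {w // w ∈ D}),
        c j * xvec V j.1 i.1 = -c j + (if j = i then c j * (Fintype.card V : ℝ) else 0) := by
      intro j _
      rcases eq_or_ne j i with rfl | hji
      · rw [if_pos rfl, show xvec V j.1 j.1 = (Fintype.card V : ℝ) - 1 from if_pos rfl]
        ring
      · rw [if_neg hji,
          show xvec V j.1 i.1 = -1 from if_neg (fun he => hji (Subtype.ext he.symm))]
        ring
    rw [Finset.sum_congr rfl h', Finset.sum_add_distrib, Finset.sum_neg_distrib, hsum0,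
      Finset.sum_ite_eq' Finset.univ i (fun j => c j * (Fintype.card V : ℝ)),
      if_pos (Finset.mem_univ i)] at h
    have hcard : (0 : ℝ) < (Fintype.card V : ℝ) := by
      exact_mod_cast Fintype.card_pos
    have : c i * (Fintype.card V : ℝ) = 0 := by linarith [h]
    rcases mul_eq_zero.mp this with h5 | h5
    · exact h5
    · exact absurd h5 (ne_of_gt hcard)
  have hli : LinearIndependent ℝ
      (fun i : {w // w ∈ D} => (WithLp.equiv 2 (V → ℝ)).symm (xvec V i.1)) := by
    have := hli0.map' ((WithLp.linearEquiv 2 ℝ (V → ℝ)).symm.toLinearMap)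
      (LinearMap.ker_eq_bot_of_injective (WithLp.linearEquiv 2 ℝ (V → ℝ)).symm.injective)
    exact this
  -- D.card ≤ finrank W
  have hcardle : D.card ≤ Module.finrank ℝ W := by
    have hli' : LinearIndependent ℝ
        (fun i : {w // w ∈ D} =>
          (⟨(WithLp.equiv 2 (V → ℝ)).symm (xvec V i.1), hmem i⟩ : W)) := by
      apply LinearIndependent.of_comp W.subtype
      exact hli
    have := hli'.fintype_card_le_finrank
    simpa [Fintype.card_coe] using this
  -- finrank W ≤ S.card
  have hWle : Module.finrank ℝ W ≤ S.card := by
    have himg : ⇑b '' {i | μ i = t} = ↑(S.image ⇑b) := by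
      ext y
      simp [hS, Set.mem_image, eq_comm]
    calc Module.finrank ℝ W ≤ (S.image ⇑b).card := by
          rw [hW, himg]
          simpa [Set.finrank] using finrank_span_finset_le_card (R := ℝ) (S.image ⇑b)
      _ ≤ S.card := Finset.card_image_le
  exact hcardle.trans hWle
end

section
/- Let G be a connected graph on n ≥ 2 vertices and M = {v_1,...,v_r} an independent set such that all vertices in M have the same neighborhood: N_G(v_i) = N_G(v_j) for all 1 ≤ i,j ≤ r. Then all vertices of M have the same reciprocal distance degree T, and T + 1/2 is an eigenvalue of RD^L(G) with multiplicity at least r − 1. -/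
open Matrix Polynomial

set_option linter.unusedSectionVars false


lemma charpoly_conj_unitary {n : Type*} [Fintype n] [DecidableEq n]
    (U D : Matrix n n ℝ) (h1 : U * star U = 1) :
    (U * D * star U).charpoly = D.charpoly := by
  have key : charmatrix (U * D * star U) =
      (C.mapMatrix U) * charmatrix D * (C.mapMatrix (star U)) := by
    unfold charmatrix
    rw [mul_sub, sub_mul]
    have hc : Commute (Matrix.scalar n (X : ℝ[X])) (C.mapMatrix U) :=
      Matrix.scalar_commute (X : ℝ[X]) (fun r => Commute.all _ r) _
    congr 1
    · rw [← hc.eq, mul_assoc, ← _root_.map_mul, h1, _root_.map_one, mul_one]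
    · rw [← _root_.map_mul, ← _root_.map_mul]
  unfold Matrix.charpoly
  rw [key, det_mul, det_mul]
  have h2 : (C.mapMatrix U).det * (C.mapMatrix (star U)).det = 1 := by
    rw [← det_mul, ← _root_.map_mul, h1, _root_.map_one, det_one]
  calc (C.mapMatrix U).det * (charmatrix D).det * (C.mapMatrix (star U)).det
      = (charmatrix D).det * ((C.mapMatrix U).det * (C.mapMatrix (star U)).det) := by ring
    _ = (charmatrix D).det := by rw [h2, mul_one]

lemma charpoly_diagonal' {n : Type*} [Fintype n] [DecidableEq n] (d : n → ℝ) :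
    (Matrix.diagonal d).charpoly = ∏ i, (X - C (d i)) := by
  unfold Matrix.charpoly
  have : charmatrix (Matrix.diagonal d) = Matrix.diagonal (fun i => (X : ℝ[X]) - C (d i)) := by
    ext i j
    by_cases h : i = j
    · subst h; simp [charmatrix_apply_eq]
    · simp [charmatrix_apply_ne _ _ _ h, Matrix.diagonal_apply_ne _ h]
  rw [this, det_diagonal]

lemma roots_charpoly_diagonal' {n : Type*} [Fintype n] [DecidableEq n] (d : n → ℝ) :
    (Matrix.diagonal d).charpoly.roots = Finset.univ.val.map d := by
  rw [charpoly_diagonal']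
  rw [show (∏ i, ((X : ℝ[X]) - C (d i)))
      = ((Finset.univ.val.map d).map (fun a => (X : ℝ[X]) - C a)).prod by
    rw [Multiset.map_map]; rfl]
  exact roots_multiset_prod_X_sub_C _

lemma card_le_count_roots {n : Type*} [Fintype n] [DecidableEq n]
    (A : Matrix n n ℝ) (hA : A.IsHermitian) (μ : ℝ)
    {ι : Type*} [Fintype ι] (v : ι → n → ℝ) (hli : LinearIndependent ℝ v)
    (hev : ∀ i, A *ᵥ v i = μ • v i) :
    Fintype.card ι ≤ Multiset.count μ A.charpoly.roots := by
  classical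
  set U : Matrix n n ℝ := (hA.eigenvectorUnitary : Matrix n n ℝ) with hUdef
  set d : n → ℝ := hA.eigenvalues with hddef
  have hU : U * star U = 1 := by
    exact Unitary.coe_mul_star_self hA.eigenvectorUnitary
  have hU' : star U * U = 1 := by
    exact Unitary.coe_star_mul_self hA.eigenvectorUnitary
  have hsp : A = U * Matrix.diagonal d * star U := by
    have h := hA.spectral_theorem
    simpa using h
  have hroots : A.charpoly.roots = Finset.univ.val.map d := by
    conv_lhs => rw [hsp]
    rw [charpoly_conj_unitary _ _ hU, roots_charpoly_diagonal']
  rw [hroots, Multiset.count_map]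
  have hcard : (Multiset.filter (fun a => μ = d a) Finset.univ.val).card
      = (Finset.univ.filter (fun a => μ = d a)).card := by
    rw [← Finset.filter_val]; rfl
  rw [hcard]
  set S : Finset n := Finset.univ.filter (fun a => μ = d a) with hS
  let L : (n → ℝ) →ₗ[ℝ] (↥S → ℝ) :=
    (LinearMap.funLeft ℝ ℝ (fun j : ↥S => (j : n))).comp (Matrix.mulVecLin (star U))
  have key : ∀ x : n → ℝ, A *ᵥ x = μ • x → L x = 0 → x = 0 := by
    intro x hx hLx
    have hy : Matrix.diagonal d *ᵥ (star U *ᵥ x) = μ • (star U *ᵥ x) := by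
      rw [Matrix.mulVec_mulVec]
      have hcomm : Matrix.diagonal d * star U = star U * A := by
        rw [hsp, ← mul_assoc, ← mul_assoc, hU', one_mul]
      rw [hcomm, ← Matrix.mulVec_mulVec, hx, Matrix.mulVec_smul]
    have hzero : star U *ᵥ x = 0 := by
      funext j
      by_cases hj : μ = d j
      · have hjS : j ∈ S := by simp [hS, hj]
        have := congrFun hLx ⟨j, hjS⟩
        simpa [L] using this
      · have h2 := congrFun hy j
        have h3 : d j * (star U *ᵥ x) j = μ * (star U *ᵥ x) j := by
          simpa [Matrix.mulVec_diagonal] using h2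
        have h4 : (d j - μ) * (star U *ᵥ x) j = 0 := by ring_nf; linarith [h3]
        have h5 : d j - μ ≠ 0 := sub_ne_zero.mpr (fun h => hj h.symm)
        simpa [h5] using mul_eq_zero.mp h4
    have hxx : x = U *ᵥ (star U *ᵥ x) := by
      rw [Matrix.mulVec_mulVec, hU, Matrix.one_mulVec]
    rw [hzero, Matrix.mulVec_zero] at hxx
    exact hxx
  have hli2 : LinearIndependent ℝ (fun i => L (v i)) := by
    rw [Fintype.linearIndependent_iff] at hli ⊢
    intro g hg
    have hLx : L (∑ i, g i • v i) = 0 := by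
      rw [map_sum]
      simpa [_root_.map_smul] using hg
    have hex : A *ᵥ (∑ i, g i • v i) = μ • (∑ i, g i • v i) := by
      have h1 : A *ᵥ (∑ i, g i • v i) = ∑ i, g i • (A *ᵥ v i) := by
        show A.mulVecLin _ = _
        rw [map_sum]
        simp [Matrix.mulVecLin_apply]
      rw [h1]
      simp_rw [hev, Finset.smul_sum]
      congr 1
      funext i
      rw [smul_comm]
    exact hli g (key _ hex hLx)
  have := hli2.fintype_card_le_finrank
  rwa [Module.finrank_fintype_fun_eq_card, Fintype.card_coe] at this

section GraphAux

variable {V : Type*} [Fintype V] [DecidableEq V]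

/-- The transposition of two nonadjacent vertices with the same neighborhood
is a graph automorphism. -/
def swapIso (G : SimpleGraph V) (u w : V) (hnadj : ¬ G.Adj u w)
    (hN : G.neighborSet u = G.neighborSet w) : G ≃g G where
  toEquiv := Equiv.swap u w
  map_rel_iff' := by
    have hadj : ∀ x, G.Adj u x ↔ G.Adj w x := fun x => by
      rw [← SimpleGraph.mem_neighborSet, ← SimpleGraph.mem_neighborSet, hN]
    have dir : ∀ a b, G.Adj a b → G.Adj (Equiv.swap u w a) (Equiv.swap u w b) := by
      intro a b hab
      by_cases hau : a = u
      · subst hau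
        by_cases hbw : b = w
        · subst hbw; exact absurd hab hnadj
        · have hbu : b ≠ a := fun h => by subst h; exact G.irrefl hab
          rw [Equiv.swap_apply_left, Equiv.swap_apply_of_ne_of_ne hbu hbw]
          exact (hadj b).mp hab
      · by_cases haw : a = w
        · subst haw
          by_cases hbu : b = u
          · subst hbu; exact absurd hab.symm hnadj
          · have hbw : b ≠ a := fun h => by subst h; exact G.irrefl hab
            rw [Equiv.swap_apply_right, Equiv.swap_apply_of_ne_of_ne hbu hbw]
            exact (hadj b).mpr hab
        · rw [Equiv.swap_apply_of_ne_of_ne hau haw]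
          by_cases hbu : b = u
          · subst hbu; rw [Equiv.swap_apply_left]; exact ((hadj a).mp hab.symm).symm
          · by_cases hbw : b = w
            · subst hbw; rw [Equiv.swap_apply_right]; exact ((hadj a).mpr hab.symm).symm
            · rw [Equiv.swap_apply_of_ne_of_ne hbu hbw]; exact hab
    intro a b
    constructor
    · intro h
      have := dir _ _ h
      simpa [Equiv.swap_apply_self] using this
    · exact dir a b

lemma swapIso_apply (G : SimpleGraph V) (u w : V) (hnadj : ¬ G.Adj u w)
    (hN : G.neighborSet u = G.neighborSet w) (a : V) :
    swapIso G u w hnadj hN a = Equiv.swap u w a := rfl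

lemma iso_dist (G : SimpleGraph V) (hc : G.Connected) (e : G ≃g G) (a b : V) :
    G.dist (e a) (e b) = G.dist a b := by
  have h : ∀ (e : G ≃g G) (a b : V), G.dist (e a) (e b) ≤ G.dist a b := by
    intro e a b
    obtain ⟨p, hp⟩ := hc.exists_walk_length_eq_dist a b
    calc G.dist (e a) (e b) ≤ (p.map e.toHom).length := SimpleGraph.dist_le _
      _ = G.dist a b := by rw [SimpleGraph.Walk.length_map, hp]
  refine le_antisymm (h e a b) ?_
  have := h e.symm (e a) (e b)
  simpa using this

lemma dist_swap_pair (G : SimpleGraph V) (hc : G.Connected) {u w : V}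
    (hnadj : ¬ G.Adj u w) (hN : G.neighborSet u = G.neighborSet w) (x y : V) :
    G.dist (Equiv.swap u w x) (Equiv.swap u w y) = G.dist x y :=
  iso_dist G hc (swapIso G u w hnadj hN) x y

lemma dist_pair_eq_two (G : SimpleGraph V) (hc : G.Connected) {u w : V} (hne : u ≠ w)
    (hnadj : ¬ G.Adj u w) (hN : G.neighborSet u = G.neighborSet w) :
    G.dist u w = 2 := by
  have hadj : ∀ x, G.Adj u x ↔ G.Adj w x := fun x => by
    rw [← SimpleGraph.mem_neighborSet, ← SimpleGraph.mem_neighborSet, hN]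
  obtain ⟨p⟩ := hc.preconnected u w
  have h2 : G.dist u w ≤ 2 := by
    cases p with
    | nil => exact absurd rfl hne
    | cons h q =>
      have hwz := (hadj _).mp h
      have := SimpleGraph.dist_le
        (SimpleGraph.Walk.cons h (SimpleGraph.Walk.cons hwz.symm SimpleGraph.Walk.nil))
      simpa using this
  have h0 : 0 < G.dist u w := hc.pos_dist_of_ne hne
  have h1 : G.dist u w ≠ 1 := fun h => hnadj (SimpleGraph.dist_eq_one_iff_adj.mp h)
  omega

lemma RD_swap (G : SimpleGraph V) (hc : G.Connected) {u w : V}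
    (hnadj : ¬ G.Adj u w) (hN : G.neighborSet u = G.neighborSet w) (x : V) :
    RD G u (Equiv.swap u w x) = RD G w x := by
  by_cases hx : x = w
  · subst hx
    simp [RD, Equiv.swap_apply_right]
  · have h1 : u ≠ Equiv.swap u w x := by
      intro h
      apply hx
      have := congrArg (Equiv.swap u w) h
      rw [Equiv.swap_apply_self, Equiv.swap_apply_left] at this
      exact this.symm
    have h2 : w ≠ x := fun h => hx h.symm
    have hd : G.dist u (Equiv.swap u w x) = G.dist w x := by
      have h3 := dist_swap_pair G hc hnadj hN w x
      rwa [Equiv.swap_apply_right] at h3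
    simp [RD, h1, h2, hd]

lemma RTr_pair_eq (G : SimpleGraph V) (hc : G.Connected) {u w : V}
    (hnadj : ¬ G.Adj u w) (hN : G.neighborSet u = G.neighborSet w) :
    RTr G u = RTr G w := by
  unfold RTr
  rw [← Equiv.sum_comp (Equiv.swap u w) (fun x => RD G u x)]
  exact Finset.sum_congr rfl (fun x _ => RD_swap G hc hnadj hN x)

lemma dist_eq_of_swap (G : SimpleGraph V) (hc : G.Connected) {u w a : V}
    (hnadj : ¬ G.Adj u w) (hN : G.neighborSet u = G.neighborSet w)
    (hau : a ≠ u) (haw : a ≠ w) : G.dist a u = G.dist a w := by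
  have h := dist_swap_pair G hc hnadj hN a u
  rw [Equiv.swap_apply_of_ne_of_ne hau haw, Equiv.swap_apply_left] at h
  exact h.symm

end GraphAux


theorem stmt9 {V : Type*} [Fintype V] [DecidableEq V] (G : SimpleGraph V)
    (hc : G.Connected) (hn : 2 ≤ Fintype.card V)
    (M : Finset V) (hind : ∀ u ∈ M, ∀ w ∈ M, ¬ G.Adj u w)
    (hnbr : ∀ u ∈ M, ∀ w ∈ M, G.neighborSet u = G.neighborSet w) :
    ∃ T : ℝ, (∀ v ∈ M, RTr G v = T) ∧
      M.card - 1 ≤ Multiset.count (T + 1/2) (RDL G).charpoly.roots := by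
  classical
  rcases M.eq_empty_or_nonempty with rfl | hMne
  · exact ⟨0, fun v hv => absurd hv (by simp), by simp⟩
  obtain ⟨v0, hv0⟩ := hMne
  set T : ℝ := RTr G v0 with hTdef
  have hRTreq : ∀ v ∈ M, RTr G v = T := by
    intro v hv
    by_cases h : v = v0
    · rw [h]
    · exact RTr_pair_eq G hc (hind v hv v0 hv0) (hnbr v hv v0 hv0)
  refine ⟨T, hRTreq, ?_⟩
  -- the eigenvector family
  set ι := {x // x ∈ M.erase v0} with hι
  let f : ι → V → ℝ := fun i => Pi.single (i : V) 1 - Pi.single v0 1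
  have hmemM : ∀ i : ι, (i : V) ∈ M := fun i => Finset.mem_of_mem_erase i.2
  have hnev0 : ∀ i : ι, (i : V) ≠ v0 := fun i => Finset.ne_of_mem_erase i.2
  -- Hermitian
  have hRDsymm : ∀ a b : V, RD G a b = RD G b a := by
    intro a b
    by_cases h : a = b
    · rw [h]
    · simp [RD, h, Ne.symm h, SimpleGraph.dist_comm]
  have hherm : (RDL G).IsHermitian := by
    show (RDL G)ᴴ = RDL G
    ext a b
    simp only [Matrix.conjTranspose_apply, star_trivial, RDL, Matrix.sub_apply,
      Matrix.diagonal_apply, hRDsymm a b]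
    by_cases h : a = b
    · subst h; rfl
    · simp [h, Ne.symm h]
  -- entries of RDL
  have hRDL : ∀ a b : V, RDL G a b = (if a = b then RTr G a else 0) - RD G a b := by
    intro a b
    simp [RDL, Matrix.sub_apply, Matrix.diagonal_apply]
  have hsum : ∀ a c : V, (∑ b, RDL G a b * (Pi.single c 1 : V → ℝ) b) = RDL G a c := by
    intro a c
    simp [Pi.single_apply, mul_ite, Finset.sum_ite_eq']
  -- eigenvalue equation
  have hev : ∀ i : ι, RDL G *ᵥ f i = (T + 1/2) • f i := by
    intro i
    set u : V := (i : V) with hu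
    have huM : u ∈ M := hmemM i
    have huv0 : u ≠ v0 := hnev0 i
    have hdist2 : G.dist u v0 = 2 :=
      dist_pair_eq_two G hc huv0 (hind u huM v0 hv0) (hnbr u huM v0 hv0)
    have hRDuv0 : RD G u v0 = 1/2 := by
      simp only [RD, if_neg huv0, hdist2]
      norm_num
    have hRDv0u : RD G v0 u = 1/2 := by rw [hRDsymm v0 u, hRDuv0]
    funext a
    have hmv : (RDL G *ᵥ f i) a = RDL G a u - RDL G a v0 := by
      simp only [f, Matrix.mulVec, dotProduct, Pi.sub_apply, mul_sub,
        Finset.sum_sub_distrib]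
      rw [hsum a u, hsum a v0]
    rw [hmv]
    by_cases hau : a = u
    · subst hau
      have h0 : RD G u u = 0 := by simp [RD]
      rw [hRDL u u, hRDL u v0, if_pos rfl, if_neg huv0, h0, hRTreq u huM]
      simp [f, Pi.single_apply, huv0, hRDuv0, ← hu]
    · by_cases hav0 : a = v0
      · subst hav0
        have h0 : RD G a a = 0 := by simp [RD]
        rw [hRDL a u, hRDL a a, if_neg (Ne.symm huv0), if_pos rfl, h0, hRTreq a hv0]
        simp [f, Pi.single_apply, Ne.symm huv0, hRDv0u, ← hu]
        ring
      · have hdeq : G.dist a u = G.dist a v0 := by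
          refine dist_eq_of_swap G hc (hind u huM v0 hv0) (hnbr u huM v0 hv0) hau hav0
        have hRDeq : RD G a u = RD G a v0 := by
          simp [RD, hau, hav0, hdeq]
        rw [hRDL a u, hRDL a v0, if_neg hau, if_neg hav0, hRDeq]
        simp [f, Pi.single_apply, hau, hav0, ← hu]
  -- linear independence
  have hli : LinearIndependent ℝ f := by
    rw [Fintype.linearIndependent_iff]
    intro g hg i
    have h := congrFun hg (i : V)
    simp only [f, Finset.sum_apply, Pi.smul_apply, Pi.sub_apply, Pi.single_apply,
      smul_eq_mul, Pi.zero_apply, mul_sub, Finset.sum_sub_distrib] at h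
    rw [if_neg (hnev0 i)] at h
    simp only [mul_zero, Finset.sum_const_zero, sub_zero] at h
    have hsum2 : ∑ j : ι, g j * (if (i : V) = (j : V) then (1:ℝ) else 0) = g i := by
      rw [Finset.sum_eq_single i]
      · simp
      · intro j _ hj
        have : (i : V) ≠ (j : V) := fun hh => hj (Subtype.ext hh.symm)
        simp [this]
      · intro hi; exact absurd (Finset.mem_univ i) hi
    rw [hsum2] at h
    exact h
  have hcount := card_le_count_roots (RDL G) hherm (T + 1/2) f hli hev
  have hcardι : Fintype.card ι = M.card - 1 := by
    rw [Fintype.card_coe, Finset.card_erase_of_mem hv0]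
  rw [hcardι] at hcount
  exact hcount
end

section
/- The reciprocal distance Laplacian characteristic polynomial of the complete k-partite graph K_{n_1,...,n_k} on n = n_1+...+n_k vertices is x(x−n)^{k−1} ∏_{i=1}^{k} (x − (n − n_i/2))^{n_i − 1}. Equivalently, its RD^L-spectrum consists of 0 (once), n with multiplicity k−1, and n − n_i/2 with multiplicity n_i − 1 for each i. -/
open Matrix Polynomial

section Aux
variable {k : ℕ} {nf : Fin k → ℕ}

lemma dist_multipartite (hk : 2 ≤ k) (hnf : ∀ i, 1 ≤ nf i)
    (u v : Σ i, Fin (nf i)) (huv : u ≠ v) :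
    (SimpleGraph.completeMultipartiteGraph fun i => Fin (nf i)).dist u v =
      if u.1 = v.1 then 2 else 1 := by
  set G := SimpleGraph.completeMultipartiteGraph fun i => Fin (nf i) with hG
  by_cases h : u.1 = v.1
  · simp only [h, if_pos]
    obtain ⟨i', hi'⟩ : ∃ i' : Fin k, i' ≠ u.1 := by
      by_cases h0 : u.1 = ⟨0, by omega⟩
      · exact ⟨⟨1, by omega⟩, by rw [h0]; simp [Fin.ext_iff]⟩
      · exact ⟨⟨0, by omega⟩, fun hc => h0 (hc ▸ rfl)⟩
    set w : Σ i, Fin (nf i) := ⟨i', ⟨0, hnf i'⟩⟩ with hw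
    have ha1 : G.Adj u w := by simp [hG, hw, (Ne.symm hi')]
    have ha2 : G.Adj w v := by simp [hG, hw, h ▸ hi']
    have hle : G.dist u v ≤ 2 := by
      have := SimpleGraph.dist_le (SimpleGraph.Walk.cons ha1 (SimpleGraph.Walk.cons ha2 SimpleGraph.Walk.nil))
      simpa using this
    have h0 : G.dist u v ≠ 0 := by
      have hr : G.Reachable u v := ⟨SimpleGraph.Walk.cons ha1 (SimpleGraph.Walk.cons ha2 SimpleGraph.Walk.nil)⟩
      exact fun hc => huv (by rwa [SimpleGraph.Reachable.dist_eq_zero_iff hr] at hc)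
    have h1 : G.dist u v ≠ 1 := by
      intro hc
      rw [SimpleGraph.dist_eq_one_iff_adj] at hc
      have : u.1 ≠ v.1 := by simpa [hG] using hc
      exact this h
    omega
  · simp only [h, if_neg, if_false]
    have : (SimpleGraph.completeMultipartiteGraph fun i => Fin (nf i)).Adj u v := h
    rw [SimpleGraph.dist_eq_one_iff_adj.mpr this]

lemma RD_multipartite (hk : 2 ≤ k) (hnf : ∀ i, 1 ≤ nf i)
    (u v : Σ i, Fin (nf i)) :
    RD (SimpleGraph.completeMultipartiteGraph fun i => Fin (nf i)) u v =
      if u = v then 0 else if u.1 = v.1 then 1/2 else 1 := by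
  by_cases h : u = v
  · simp [RD, h]
  · rw [RD, if_neg h, dist_multipartite hk hnf u v h]
    by_cases h1 : u.1 = v.1 <;> simp [h, h1] <;> norm_num

lemma sigma_sum_part (g : Fin k → ℝ) :
    ∑ v : Σ i, Fin (nf i), g v.1 = ∑ i, (nf i : ℝ) * g i := by
  rw [← Finset.univ_sigma_univ, Finset.sum_sigma]
  simp [Finset.sum_const, mul_comm]

lemma RTr_multipartite (hk : 2 ≤ k) (hnf : ∀ i, 1 ≤ nf i) (u : Σ i, Fin (nf i)) :
    RTr (SimpleGraph.completeMultipartiteGraph fun i => Fin (nf i)) u =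
      ((∑ i, nf i : ℕ) : ℝ) - (nf u.1 : ℝ) / 2 - 1 / 2 := by
  unfold RTr
  have h1 : ∀ v : Σ i, Fin (nf i),
      RD (SimpleGraph.completeMultipartiteGraph fun i => Fin (nf i)) u v =
      (if v.1 = u.1 then (1/2 : ℝ) else 1) - (if v = u then (1/2:ℝ) else 0) := by
    intro v
    rw [RD_multipartite hk hnf]
    by_cases h : u = v
    · simp [h]
    · by_cases h2 : u.1 = v.1
      · rw [if_neg h, if_pos h2, if_neg (Ne.symm h), if_pos h2.symm]
        simp
      · rw [if_neg h, if_neg h2, if_neg (Ne.symm h),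
          if_neg (fun hc : v.1 = u.1 => h2 hc.symm)]
        simp
  rw [Finset.sum_congr rfl (fun v _ => h1 v), Finset.sum_sub_distrib,
    Finset.sum_ite_eq' Finset.univ u (fun _ => (1/2:ℝ))]
  simp only [Finset.mem_univ, if_true]
  have key : (∑ v : Σ i, Fin (nf i), if v.1 = u.1 then (1/2:ℝ) else 1)
      = ∑ i, (nf i : ℝ) * (if i = u.1 then (1/2:ℝ) else 1) := by
    rw [← Finset.univ_sigma_univ, Finset.sum_sigma]
    simp [Finset.sum_const, mul_comm]
  rw [key]
  have key2 : ∑ i, (nf i : ℝ) * (if i = u.1 then (1/2:ℝ) else 1)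
      = ∑ i, ((nf i : ℝ) - (if i = u.1 then (nf i : ℝ)/2 else 0)) := by
    apply Finset.sum_congr rfl; intro i _; by_cases h : i = u.1 <;> simp [h] <;> ring
  rw [key2, Finset.sum_sub_distrib, Finset.sum_ite_eq' Finset.univ u.1 (fun i => (nf i : ℝ)/2)]
  push_cast
  simp

lemma sum_ind_le (m j : ℕ) (hj : j < m) :
    ∑ b : Fin m, (if (b : ℕ) ≤ j then (1:ℝ) else 0) = (j : ℝ) + 1 := by
  rw [Fin.sum_univ_eq_sum_range (fun x => if x ≤ j then (1:ℝ) else 0) m,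
    Finset.range_eq_Ico, ← Finset.sum_Ico_consecutive _ (Nat.zero_le (j+1)) (by omega)]
  have h1 : ∑ x ∈ Finset.Ico 0 (j+1), (if x ≤ j then (1:ℝ) else 0)
      = ∑ x ∈ Finset.Ico 0 (j+1), (1:ℝ) := by
    apply Finset.sum_congr rfl; intro x hx
    simp only [Finset.mem_Ico] at hx
    rw [if_pos (by omega)]
  have h2 : ∑ x ∈ Finset.Ico (j+1) m, (if x ≤ j then (1:ℝ) else 0) = 0 := by
    apply Finset.sum_eq_zero; intro x hx
    simp only [Finset.mem_Ico] at hx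
    rw [if_neg (by omega)]
  rw [h1, h2, Finset.sum_const, Nat.card_Ico]
  simp

lemma sum_ind_eq (m c : ℕ) (hc : c < m) :
    ∑ b : Fin m, (if (b : ℕ) = c then (1:ℝ) else 0) = 1 := by
  have h1 : ∀ b : Fin m, (if (b : ℕ) = c then (1:ℝ) else 0)
      = (if b = ⟨c, hc⟩ then (1:ℝ) else 0) := by
    intro b; congr 1; simp [Fin.ext_iff]
  rw [Finset.sum_congr rfl (fun b _ => h1 b), Finset.sum_ite_eq' Finset.univ _ (fun _ => (1:ℝ))]
  simp

lemma sigma_eq_iff (w v : Σ i, Fin (nf i)) : w = v ↔ w.1 = v.1 ∧ (w.2 : ℕ) = (v.2 : ℕ) := by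
  constructor
  · rintro rfl; exact ⟨rfl, rfl⟩
  · obtain ⟨a, b⟩ := w; obtain ⟨c, d⟩ := v
    rintro ⟨h1, h2⟩
    dsimp at h1 h2
    subst h1
    rw [Fin.ext h2]

end Aux

section Defs
variable (k : ℕ) (nf : Fin k → ℕ)

noncomputable def Pm (hk : 0 < k) : Matrix (Σ i, Fin (nf i)) (Σ i, Fin (nf i)) ℝ :=
  fun u v =>
  if (v.2 : ℕ) + 1 < nf v.1 then
    (if u.1 = v.1 ∧ (u.2 : ℕ) = (v.2 : ℕ) then 1 else 0)
      - (if u.1 = v.1 ∧ (u.2 : ℕ) = (v.2 : ℕ) + 1 then 1 else 0)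
  else if v.1 = ⟨0, hk⟩ then 1
  else (if u.1 = ⟨0, hk⟩ then (nf v.1 : ℝ) else 0) - (if u.1 = v.1 then (nf ⟨0, hk⟩ : ℝ) else 0)

noncomputable def Qm (hk : 0 < k) : Matrix (Σ i, Fin (nf i)) (Σ i, Fin (nf i)) ℝ :=
  fun u v =>
  if (u.2 : ℕ) + 1 < nf u.1 then
    (if v.1 = u.1 ∧ (v.2 : ℕ) ≤ (u.2 : ℕ) then 1 else 0)
      - (if v.1 = u.1 then ((u.2 : ℕ) + 1 : ℝ) / (nf u.1) else 0)
  else if u.1 = ⟨0, hk⟩ then ((∑ i, nf i : ℕ) : ℝ)⁻¹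
  else (((∑ i, nf i : ℕ) : ℝ)⁻¹ - (if v.1 = u.1 then (nf u.1 : ℝ)⁻¹ else 0))
        * (nf ⟨0, hk⟩ : ℝ)⁻¹

noncomputable def dvec (hk : 0 < k) : (Σ i, Fin (nf i)) → ℝ := fun v =>
  if (v.2 : ℕ) + 1 < nf v.1 then ((∑ i, nf i : ℕ) : ℝ) - (nf v.1 : ℝ) / 2
  else if v.1 = ⟨0, hk⟩ then 0 else ((∑ i, nf i : ℕ) : ℝ)

end Defs

section Sums
variable {k : ℕ} {nf : Fin k → ℕ} (hk : 0 < k) (hnf : ∀ i, 1 ≤ nf i)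

lemma Pm_col_part (a : Fin k) (v : Σ i, Fin (nf i)) :
    ∑ b : Fin (nf a), Pm k nf hk ⟨a, b⟩ v =
      if (v.2 : ℕ) + 1 < nf v.1 then 0
      else if v.1 = ⟨0, hk⟩ then (nf a : ℝ)
      else (if a = ⟨0, hk⟩ then (nf a : ℝ) * (nf v.1) else 0)
            - (if a = v.1 then (nf a : ℝ) * (nf ⟨0, hk⟩) else 0) := by
  unfold Pm
  by_cases hA : (v.2 : ℕ) + 1 < nf v.1
  · simp only [hA, if_true]
    rw [Finset.sum_sub_distrib]
    by_cases ha : a = v.1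
    · subst ha
      simp only [true_and]
      rw [sum_ind_eq _ _ (by omega), sum_ind_eq _ _ hA]
      ring
    · have e1 : ∀ b : Fin (nf a),
          (if a = v.1 ∧ (b : ℕ) = (v.2 : ℕ) then (1:ℝ) else 0) = 0 :=
        fun b => if_neg (fun h => ha h.1)
      have e2 : ∀ b : Fin (nf a),
          (if a = v.1 ∧ (b : ℕ) = (v.2 : ℕ) + 1 then (1:ℝ) else 0) = 0 :=
        fun b => if_neg (fun h => ha h.1)
      rw [Finset.sum_congr rfl (fun b _ => e1 b), Finset.sum_congr rfl (fun b _ => e2 b)]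
      simp
  · simp only [hA, if_false]
    by_cases hB : v.1 = ⟨0, hk⟩
    · simp [hB, Finset.sum_const]
    · simp only [hB, if_false]
      rw [Finset.sum_sub_distrib]
      by_cases h1 : a = ⟨0, hk⟩ <;> by_cases h2 : a = v.1
      · exact absurd (h2 ▸ h1 : v.1 = ⟨0, hk⟩) hB
      · simp [h1, h2, Finset.sum_const, mul_comm]
      · simp [h1, h2, Finset.sum_const, mul_comm]
      · simp [h1, h2]

lemma sigma_sum_ite_part (a : Fin k) (f : (Σ i, Fin (nf i)) → ℝ) :
    ∑ w : Σ i, Fin (nf i), (if w.1 = a then f w else 0) = ∑ b : Fin (nf a), f ⟨a, b⟩ := by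
  rw [← Finset.univ_sigma_univ, Finset.sum_sigma]
  have h1 : ∀ i : Fin k, ∑ b : Fin (nf i), (if i = a then f ⟨i, b⟩ else 0)
      = if i = a then ∑ b : Fin (nf i), f ⟨i, b⟩ else 0 := by
    intro i
    by_cases h : i = a
    · subst h; simp
    · simp [h]
  rw [Finset.sum_congr rfl (fun i _ => h1 i), Finset.sum_ite_eq' Finset.univ a
    (fun i => ∑ b : Fin (nf i), f ⟨i, b⟩)]
  simp

lemma Pm_col_total (v : Σ i, Fin (nf i)) :
    ∑ w : Σ i, Fin (nf i), Pm k nf hk w v =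
      if (v.2 : ℕ) + 1 < nf v.1 then 0
      else if v.1 = ⟨0, hk⟩ then ((∑ i, nf i : ℕ) : ℝ) else 0 := by
  rw [← Finset.univ_sigma_univ, Finset.sum_sigma,
    Finset.sum_congr rfl (fun a _ => Pm_col_part hk a v)]
  by_cases hA : (v.2 : ℕ) + 1 < nf v.1
  · simp [hA]
  · simp only [hA, if_false]
    by_cases hB : v.1 = ⟨0, hk⟩
    · simp [hB]
    · simp only [hB, if_false]
      rw [Finset.sum_sub_distrib,
        Finset.sum_ite_eq' Finset.univ (⟨0, hk⟩ : Fin k) (fun a => (nf a : ℝ) * (nf v.1)),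
        Finset.sum_ite_eq' Finset.univ v.1 (fun a => (nf a : ℝ) * (nf ⟨0, hk⟩))]
      simp [mul_comm]

lemma Qm_row_part (hnf : ∀ i, 1 ≤ nf i) (a : Fin k) (u : Σ i, Fin (nf i)) :
    ∑ b : Fin (nf a), Qm k nf hk u ⟨a, b⟩ =
      if (u.2 : ℕ) + 1 < nf u.1 then 0
      else if u.1 = ⟨0, hk⟩ then (nf a : ℝ) / ((∑ i, nf i : ℕ) : ℝ)
      else ((nf a : ℝ) / ((∑ i, nf i : ℕ) : ℝ) - (if a = u.1 then 1 else 0))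
            * (nf ⟨0, hk⟩ : ℝ)⁻¹ := by
  obtain ⟨i, j⟩ := u
  have hnfi : (nf i : ℝ) ≠ 0 := by
    have := hnf i; positivity
  unfold Qm
  by_cases hA : (j : ℕ) + 1 < nf i
  · simp only [hA, if_true]
    rw [Finset.sum_sub_distrib]
    by_cases ha : a = i
    · subst ha
      simp only [true_and, if_true]
      rw [sum_ind_le _ _ j.isLt, Finset.sum_const, Finset.card_univ, Fintype.card_fin,
        nsmul_eq_mul]
      field_simp
      ring
    · have e1 : ∀ b : Fin (nf a),
          (if a = i ∧ (b : ℕ) ≤ (j : ℕ) then (1:ℝ) else 0) = 0 :=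
        fun b => if_neg (fun h => ha h.1)
      rw [Finset.sum_congr rfl (fun b _ => e1 b)]
      simp [ha]
  · simp only [hA, if_false]
    by_cases hB : i = ⟨0, hk⟩
    · simp [hB, Finset.sum_const, div_eq_mul_inv]
    · simp only [hB, if_false]
      by_cases ha : a = i
      · subst ha
        simp only [if_pos rfl]
        rw [Finset.sum_const, Finset.card_univ, Fintype.card_fin, nsmul_eq_mul]
        field_simp
        rw [if_pos trivial, if_pos trivial, mul_sub, mul_one_div_cancel hnfi, mul_one_div]
      · simp only [ha, if_neg ha, if_false]
        rw [Finset.sum_const, Finset.card_univ, Fintype.card_fin, nsmul_eq_mul]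
        field_simp
        ring

lemma Qm_row_total (hnf : ∀ i, 1 ≤ nf i) (u : Σ i, Fin (nf i)) :
    ∑ w : Σ i, Fin (nf i), Qm k nf hk u w =
      if (u.2 : ℕ) + 1 < nf u.1 then 0
      else if u.1 = ⟨0, hk⟩ then 1 else 0 := by
  have hN : ((∑ i, nf i : ℕ) : ℝ) ≠ 0 := by
    have : 0 < ∑ i, nf i := Finset.sum_pos (fun i _ => hnf i) ⟨⟨0, hk⟩, Finset.mem_univ _⟩
    positivity
  have hcast : ∑ a, (nf a : ℝ) = ((∑ i, nf i : ℕ) : ℝ) := by push_cast; rfl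
  rw [← Finset.univ_sigma_univ, Finset.sum_sigma,
    Finset.sum_congr rfl (fun a _ => Qm_row_part hk hnf a u)]
  by_cases hA : (u.2 : ℕ) + 1 < nf u.1
  · simp [hA]
  · simp only [hA, if_false]
    by_cases hB : u.1 = ⟨0, hk⟩
    · simp only [hB, if_pos, if_true]
      rw [← Finset.sum_div, hcast, div_self hN]
    · simp only [hB, if_false]
      rw [← Finset.sum_mul]
      rw [Finset.sum_sub_distrib, ← Finset.sum_div, hcast, div_self hN,
        Finset.sum_ite_eq' Finset.univ u.1 (fun _ => (1:ℝ))]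
      simp

lemma QP (hnf : ∀ i, 1 ≤ nf i) : Qm k nf hk * Pm k nf hk = 1 := by
  have hN : ((∑ i, nf i : ℕ) : ℝ) ≠ 0 := by
    have : 0 < ∑ i, nf i := Finset.sum_pos (fun i _ => hnf i) ⟨⟨0, hk⟩, Finset.mem_univ _⟩
    positivity
  have hn0 : (nf ⟨0, hk⟩ : ℝ) ≠ 0 := by have := hnf ⟨0, hk⟩; positivity
  ext u v
  rw [Matrix.mul_apply, Matrix.one_apply]
  by_cases hA : (v.2 : ℕ) + 1 < nf v.1
  · -- difference column
    set y : Σ i, Fin (nf i) := ⟨v.1, ⟨(v.2 : ℕ) + 1, hA⟩⟩ with hy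
    have hP : ∀ w, Pm k nf hk w v = (if w = v then 1 else 0) - (if w = y then 1 else 0) := by
      intro w
      unfold Pm
      rw [if_pos hA]
      congr 1
      · by_cases h : w = v
        · rw [if_pos ((sigma_eq_iff w v).mp h), if_pos h]
        · rw [if_neg (fun hc => h ((sigma_eq_iff w v).mpr hc)), if_neg h]
      · by_cases h : w = y
        · rw [if_pos ((sigma_eq_iff w y).mp h), if_pos h]
        · rw [if_neg (fun hc => h ((sigma_eq_iff w y).mpr hc)), if_neg h]
    have hsum : ∑ w, Qm k nf hk u w * Pm k nf hk w v
        = Qm k nf hk u v - Qm k nf hk u y := by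
      rw [Finset.sum_congr rfl (fun w _ => by rw [hP w, mul_sub, mul_ite, mul_one, mul_zero,
        mul_ite, mul_one, mul_zero]), Finset.sum_sub_distrib,
        Finset.sum_ite_eq' Finset.univ v (fun w => Qm k nf hk u w),
        Finset.sum_ite_eq' Finset.univ y (fun w => Qm k nf hk u w)]
      simp
    rw [hsum]
    obtain ⟨i, j⟩ := u
    have hRHS : ((⟨i, j⟩ : Σ i, Fin (nf i)) = v) = (i = v.1 ∧ (j : ℕ) = (v.2 : ℕ)) :=
      propext (sigma_eq_iff ⟨i, j⟩ v)
    unfold Qm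
    by_cases hU : (j : ℕ) + 1 < nf i
    · simp only [hU, if_true, hRHS, hy]
      by_cases hiv : v.1 = i
      · simp only [hiv, eq_self_iff_true, true_and, if_true]
        have hy2 : (y.2 : ℕ) = (v.2 : ℕ) + 1 := by rw [hy]
        split_ifs <;> (try (exfalso; omega)) <;> ring
      · have h2 : ¬(i = v.1) := fun h => hiv h.symm
        simp [hiv, h2]
    · have huv : ¬((⟨i, j⟩ : Σ i, Fin (nf i)) = v) := by
        rw [hRHS]; rintro ⟨h1, h2⟩; subst h1; omega
      rw [if_neg huv]
      by_cases hi0 : i = ⟨0, hk⟩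
      · subst hi0
        simp [hU, hy]
      · simp only [hU, if_false, hi0, if_false, hy]
        ring
  · by_cases hB : v.1 = ⟨0, hk⟩
    · have hP : ∀ w, Pm k nf hk w v = 1 := by
        intro w; unfold Pm; rw [if_neg hA, if_pos hB]
      rw [Finset.sum_congr rfl (fun w _ => by rw [hP w, mul_one]), Qm_row_total hk hnf u]
      by_cases hU : (u.2 : ℕ) + 1 < nf u.1
      · have huv : ¬(u = v) := by
          rintro rfl; omega
        rw [if_pos hU, if_neg huv]
      · by_cases hi0 : u.1 = ⟨0, hk⟩
        · have huv : u = v := by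
            rw [sigma_eq_iff]
            refine ⟨hi0.trans hB.symm, ?_⟩
            have h1 := u.2.isLt
            have h2 := v.2.isLt
            have h3 : nf u.1 = nf v.1 := by rw [hi0, hB]
            omega
          rw [if_neg hU, if_pos hi0, if_pos huv]
        · have huv : ¬(u = v) := by
            rw [sigma_eq_iff]; rintro ⟨h1, h2⟩; exact hi0 (h1.trans hB)
          rw [if_neg hU, if_neg hi0, if_neg huv]
    · have hP : ∀ w, Pm k nf hk w v
          = (if w.1 = ⟨0, hk⟩ then (nf v.1 : ℝ) else 0)
            - (if w.1 = v.1 then (nf ⟨0, hk⟩ : ℝ) else 0) := by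
        intro w; unfold Pm; rw [if_neg hA, if_neg hB]
      have hsum : ∑ w, Qm k nf hk u w * Pm k nf hk w v
          = (∑ b : Fin (nf ⟨0, hk⟩), Qm k nf hk u ⟨⟨0, hk⟩, b⟩) * (nf v.1 : ℝ)
            - (∑ b : Fin (nf v.1), Qm k nf hk u ⟨v.1, b⟩) * (nf ⟨0, hk⟩ : ℝ) := by
        rw [Finset.sum_congr rfl (fun w _ => by
            rw [hP w, mul_sub, mul_ite, mul_zero, mul_ite, mul_zero]),
          Finset.sum_sub_distrib,
          sigma_sum_ite_part (⟨0, hk⟩ : Fin k) (fun w => Qm k nf hk u w * (nf v.1 : ℝ)),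
          sigma_sum_ite_part v.1 (fun w => Qm k nf hk u w * (nf ⟨0, hk⟩ : ℝ)),
          ← Finset.sum_mul, ← Finset.sum_mul]
      rw [hsum, Qm_row_part hk hnf ⟨0, hk⟩ u, Qm_row_part hk hnf v.1 u]
      by_cases hU : (u.2 : ℕ) + 1 < nf u.1
      · have huv : ¬(u = v) := by rintro rfl; omega
        simp [hU, huv]
      · by_cases hi0 : u.1 = ⟨0, hk⟩
        · have huv : ¬(u = v) := by
            rw [sigma_eq_iff]; rintro ⟨h1, h2⟩; exact hB (h1 ▸ hi0)
          simp only [hU, if_false, hi0, if_true, huv]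
          field_simp
          split_ifs <;> ring
        · by_cases hiv : u.1 = v.1
          · have huv : u = v := by
              rw [sigma_eq_iff]
              refine ⟨hiv, ?_⟩
              have h1 := u.2.isLt
              have h2 := v.2.isLt
              have h3 : nf u.1 = nf v.1 := by rw [hiv]
              omega
            have h4 : ¬((⟨0, hk⟩ : Fin k) = u.1) := fun h => hi0 h.symm
            simp only [hU, if_false, hi0, if_false, huv, if_true, h4, hiv.symm]
            field_simp
            ring
          · have huv : ¬(u = v) := by
              rw [sigma_eq_iff]; rintro ⟨h1, h2⟩; exact hiv h1
            have h4 : ¬((⟨0, hk⟩ : Fin k) = u.1) := fun h => hi0 h.symm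
            have h5 : ¬(v.1 = u.1) := fun h => hiv h.symm
            simp only [hU, if_false, hi0, if_false, huv, h4, h5]
            ring

lemma RDLP (hk2 : 2 ≤ k) (hnf : ∀ i, 1 ≤ nf i) :
    RDL (SimpleGraph.completeMultipartiteGraph fun i => Fin (nf i)) * Pm k nf hk
      = Pm k nf hk * Matrix.diagonal (dvec k nf hk) := by
  ext u v
  rw [Matrix.mul_diagonal]
  unfold RDL
  rw [Matrix.sub_mul, Matrix.sub_apply, Matrix.diagonal_mul, Matrix.mul_apply,
    RTr_multipartite hk2 hnf u]
  have hRD : ∀ w, RD (SimpleGraph.completeMultipartiteGraph fun i => Fin (nf i)) u w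
      = 1 - (if w.1 = u.1 then (1/2:ℝ) else 0) - (if w = u then (1/2:ℝ) else 0) := by
    intro w
    rw [RD_multipartite hk2 hnf]
    by_cases h : u = w
    · subst h; norm_num
    · rw [if_neg h, if_neg (fun hc : w = u => h hc.symm)]
      by_cases h2 : u.1 = w.1
      · rw [if_pos h2, if_pos h2.symm]; norm_num
      · rw [if_neg h2, if_neg (fun hc : w.1 = u.1 => h2 hc.symm)]; norm_num
  have hterm : ∀ w, RD (SimpleGraph.completeMultipartiteGraph fun i => Fin (nf i)) u w
        * Pm k nf hk w v
      = Pm k nf hk w v - (if w.1 = u.1 then (1/2:ℝ) * Pm k nf hk w v else 0)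
        - (if w = u then (1/2:ℝ) * Pm k nf hk w v else 0) := by
    intro w
    rw [hRD w]
    split_ifs <;> ring
  rw [Finset.sum_congr rfl (fun w _ => hterm w), Finset.sum_sub_distrib,
    Finset.sum_sub_distrib,
    sigma_sum_ite_part u.1 (fun w => (1/2:ℝ) * Pm k nf hk w v),
    Finset.sum_ite_eq' Finset.univ u (fun w => (1/2:ℝ) * Pm k nf hk w v),
    Pm_col_total hk v, ← Finset.mul_sum, Pm_col_part hk u.1 v]
  simp only [Finset.mem_univ, if_true]
  unfold Pm dvec
  by_cases hA : (v.2 : ℕ) + 1 < nf v.1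
  · simp only [hA, if_true]
    by_cases hu1 : u.1 = v.1
    · simp only [hu1]; ring
    · simp only [hu1, false_and, if_false]
      ring
  · simp only [hA, if_false]
    by_cases hB : v.1 = ⟨0, hk⟩
    · simp only [hB, if_true]
      ring
    · simp only [hB, if_false]
      by_cases h1 : u.1 = ⟨0, hk⟩ <;> by_cases h2 : u.1 = v.1
      · exact absurd (h2.symm.trans h1) hB
      · have h3 : ¬((⟨0, hk⟩ : Fin k) = v.1) := fun h => hB h.symm
        simp only [h1, h2, if_true, if_false, h3, hB]; ring
      · simp only [h1, h2, if_true, if_false, hB]; ring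
      · simp only [h1, h2, if_false]; ring

lemma prod_regroup (hnf : ∀ i, 1 ≤ nf i) :
    ∏ v : Σ i, Fin (nf i), (X - C (dvec k nf hk v))
      = X * (X - C (((∑ t, nf t : ℕ) : ℝ))) ^ (k - 1)
        * ∏ i, (X - C (((∑ t, nf t : ℕ) : ℝ) - (nf i : ℝ) / 2)) ^ (nf i - 1) := by
  have inner : ∀ i : Fin k, ∏ j : Fin (nf i), (X - C (dvec k nf hk ⟨i, j⟩))
      = (if i = ⟨0, hk⟩ then X else X - C (((∑ t, nf t : ℕ) : ℝ)))
        * (X - C (((∑ t, nf t : ℕ) : ℝ) - (nf i : ℝ) / 2)) ^ (nf i - 1) := by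
    intro i
    have hm : nf i - 1 + 1 = nf i := by have := hnf i; omega
    set g : ℕ → ℝ[X] := fun x => X - C (if x + 1 < nf i
        then (((∑ t, nf t : ℕ) : ℝ)) - (nf i : ℝ) / 2
        else if i = ⟨0, hk⟩ then 0 else (((∑ t, nf t : ℕ) : ℝ))) with hg
    have hsame : ∀ j : Fin (nf i), (X - C (dvec k nf hk ⟨i, j⟩)) = g (j : ℕ) :=
      fun j => rfl
    rw [Finset.prod_congr rfl (fun j _ => hsame j), Fin.prod_univ_eq_prod_range g (nf i),
      ← hm, Finset.prod_range_succ, hg]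
    simp only []
    rw [if_neg (show ¬(nf i - 1 + 1 < nf i) by omega)]
    have hrest : ∀ x ∈ Finset.range (nf i - 1),
        (X - C (if x + 1 < nf i then (((∑ t, nf t : ℕ) : ℝ)) - (nf i : ℝ) / 2
            else if i = ⟨0, hk⟩ then 0 else (((∑ t, nf t : ℕ) : ℝ))))
        = X - C ((((∑ t, nf t : ℕ) : ℝ)) - (nf i : ℝ) / 2) := by
      intro x hx
      simp only [Finset.mem_range] at hx
      rw [if_pos (by omega)]
    rw [Finset.prod_congr rfl hrest, Finset.prod_const, Finset.card_range]
    by_cases h0 : i = ⟨0, hk⟩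
    · rw [if_pos h0, if_pos h0, map_zero, sub_zero, mul_comm, hm]
    · rw [if_neg h0, if_neg h0, mul_comm, hm]
  rw [← Finset.univ_sigma_univ, Finset.prod_sigma,
    Finset.prod_congr rfl (fun i _ => inner i), Finset.prod_mul_distrib]
  congr 1
  rw [← Finset.mul_prod_erase Finset.univ _ (Finset.mem_univ (⟨0, hk⟩ : Fin k)),
    if_pos rfl]
  congr 1
  have : ∀ i ∈ Finset.univ.erase (⟨0, hk⟩ : Fin k),
      (if i = ⟨0, hk⟩ then X else X - C (((∑ t, nf t : ℕ) : ℝ)))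
        = X - C (((∑ t, nf t : ℕ) : ℝ)) := by
    intro i hi
    rw [if_neg (Finset.ne_of_mem_erase hi)]
  rw [Finset.prod_congr rfl this, Finset.prod_const, Finset.card_erase_of_mem
    (Finset.mem_univ _), Finset.card_univ, Fintype.card_fin]

end Sums

lemma charpoly_conj_aux {m : Type*} [Fintype m] [DecidableEq m] {R : Type*} [CommRing R]
    (P Q M : Matrix m m R) (h : P * Q = 1) : (P * M * Q).charpoly = M.charpoly := by
  have hmap : P.map (C : R → R[X]) * Q.map C = 1 := by
    have h2 : (P * Q).map (C : R → R[X]) = (1 : Matrix m m R).map C := by rw [h]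
    rwa [Matrix.map_mul, Matrix.map_one _ (map_zero C) (map_one C)] at h2
  have key : P.map (C : R → R[X]) * M.charmatrix * Q.map C = (P * M * Q).charmatrix := by
    rw [Matrix.charmatrix, Matrix.charmatrix, RingHom.mapMatrix_apply, RingHom.mapMatrix_apply,
      Matrix.mul_sub, Matrix.sub_mul]
    congr 1
    · rw [(Matrix.scalar_commute (X : R[X]) (fun r => Commute.all _ r) (P.map C)).symm.eq,
        Matrix.mul_assoc, hmap, Matrix.mul_one]
    · rw [← Matrix.map_mul, ← Matrix.map_mul]
  rw [Matrix.charpoly, Matrix.charpoly, ← key, Matrix.det_mul, Matrix.det_mul]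
  have hdet : (P.map (C : R → R[X])).det * (Q.map C).det = 1 := by
    rw [← Matrix.det_mul, hmap, Matrix.det_one]
  calc (P.map (C : R → R[X])).det * M.charmatrix.det * (Q.map C).det
      = M.charmatrix.det * ((P.map (C : R → R[X])).det * (Q.map C).det) := by ring
    _ = M.charmatrix.det := by rw [hdet, mul_one]

lemma charpoly_diag {m : Type*} [Fintype m] [DecidableEq m] {R : Type*} [CommRing R]
    (d : m → R) : (Matrix.diagonal d).charpoly = ∏ i, (X - C (d i)) := by
  have hc : (Matrix.diagonal d).charmatrix = Matrix.diagonal (fun i => X - C (d i)) := by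
    refine Matrix.ext fun i j => ?_
    by_cases h : i = j
    · subst h; simp
    · rw [Matrix.charmatrix_apply_ne _ _ _ h, Matrix.diagonal_apply_ne _ h,
        Matrix.diagonal_apply_ne _ h, map_zero, neg_zero]
  rw [Matrix.charpoly, hc, Matrix.det_diagonal]


theorem stmt11 (k : ℕ) (hk : 2 ≤ k) (nf : Fin k → ℕ) (hnf : ∀ i, 1 ≤ nf i)
    (n : ℕ) (hn : n = ∑ i, nf i) :
    (RDL (SimpleGraph.completeMultipartiteGraph fun i => Fin (nf i))).charpoly =
      X * (X - C (n : ℝ)) ^ (k - 1) *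
        ∏ i, (X - C ((n : ℝ) - (nf i : ℝ) / 2)) ^ (nf i - 1) := by
  subst hn
  have hk0 : 0 < k := by omega
  have hQP := QP hk0 hnf
  have hPQ : Pm k nf hk0 * Qm k nf hk0 = 1 := mul_eq_one_comm.mp hQP
  have hM : RDL (SimpleGraph.completeMultipartiteGraph fun i => Fin (nf i))
      = Pm k nf hk0 * Matrix.diagonal (dvec k nf hk0) * Qm k nf hk0 := by
    calc RDL (SimpleGraph.completeMultipartiteGraph fun i => Fin (nf i))
        = RDL (SimpleGraph.completeMultipartiteGraph fun i => Fin (nf i))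
            * (Pm k nf hk0 * Qm k nf hk0) := by rw [hPQ, Matrix.mul_one]
      _ = (RDL (SimpleGraph.completeMultipartiteGraph fun i => Fin (nf i))
            * Pm k nf hk0) * Qm k nf hk0 := by rw [Matrix.mul_assoc]
      _ = _ := by rw [RDLP hk0 hk hnf]
  rw [hM, charpoly_conj_aux _ _ _ hPQ, charpoly_diag, prod_regroup hk0 hnf]
end

section
/- The reciprocal distance Laplacian spectrum of the star S_n = K_{1,n-1} is {0, n, ((n+1)/2)^{(n−2)}}. -/
open Matrix Polynomial

open Finset

/-! ### Auxiliary lemmas -/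

lemma charpoly_similar {n : Type*} [Fintype n] [DecidableEq n]
    {M P N : Matrix n n ℝ} (h : M * P = P * N) (hP : IsUnit P.det) :
    M.charpoly = N.charpoly := by
  set Pc := (C : ℝ →+* ℝ[X]).mapMatrix P with hPc
  have hcomm : Matrix.scalar n (X : ℝ[X]) * Pc = Pc * Matrix.scalar n X :=
    (scalar_commute (X : ℝ[X]) (fun r' => Commute.all _ _) Pc).eq
  have key : charmatrix M * Pc = Pc * charmatrix N := by
    simp only [charmatrix, sub_mul, mul_sub, hcomm]
    congr 1
    rw [hPc, ← _root_.map_mul, ← _root_.map_mul, h]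
  have hdet := congrArg Matrix.det key
  rw [det_mul, det_mul] at hdet
  have hPcdet : Pc.det = C P.det := (RingHom.map_det _ _).symm
  have hne : Pc.det ≠ 0 := by
    rw [hPcdet]
    simpa using hP.ne_zero
  rw [Matrix.charpoly, Matrix.charpoly]
  rw [mul_comm] at hdet
  exact mul_left_cancel₀ hne hdet

lemma star_dist_lr (m : ℕ) (a : Fin 1) (b : Fin m) :
    (completeBipartiteGraph (Fin 1) (Fin m)).dist (.inl a) (.inr b) = 1 :=
  SimpleGraph.dist_eq_one_iff_adj.mpr (by simp)

lemma star_dist_rl (m : ℕ) (b : Fin m) (a : Fin 1) :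
    (completeBipartiteGraph (Fin 1) (Fin m)).dist (.inr b) (.inl a) = 1 :=
  SimpleGraph.dist_eq_one_iff_adj.mpr (by simp)

lemma star_dist_rr (m : ℕ) (b c : Fin m) (h : b ≠ c) :
    (completeBipartiteGraph (Fin 1) (Fin m)).dist (.inr b) (.inr c) = 2 := by
  set G := completeBipartiteGraph (Fin 1) (Fin m)
  have a1 : G.Adj (Sum.inr b) (Sum.inl 0) := by simp [G]
  have a2 : G.Adj (Sum.inl 0) (Sum.inr c) := by simp [G]
  have h2 : G.dist (.inr b) (.inr c) ≤ 2 := by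
    simpa using SimpleGraph.dist_le
      (SimpleGraph.Walk.cons a1 (SimpleGraph.Walk.cons a2 SimpleGraph.Walk.nil))
  have h0 : 0 < G.dist (.inr b) (.inr c) :=
    SimpleGraph.Reachable.pos_dist_of_ne
      ⟨SimpleGraph.Walk.cons a1 (SimpleGraph.Walk.cons a2 SimpleGraph.Walk.nil)⟩ (by simp [h])
  have h1 : G.dist (.inr b) (.inr c) ≠ 1 := by
    simp only [Ne, SimpleGraph.dist_eq_one_iff_adj]
    simp [G]
  omega

lemma star_RD (m : ℕ) :
    RD (completeBipartiteGraph (Fin 1) (Fin m)) =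
      fromBlocks 0 (of fun _ _ => 1) (of fun _ _ => 1)
        (of fun i j => if i = j then 0 else 2⁻¹) := by
  ext u v
  cases u with
  | inl a => cases v with
    | inl a' => simp [RD, fromBlocks_apply₁₁, Subsingleton.elim a a']
    | inr b => simp [RD, star_dist_lr, fromBlocks_apply₁₂]
  | inr b => cases v with
    | inl a => simp [RD, star_dist_rl, fromBlocks_apply₂₁]
    | inr b' =>
      by_cases h : b = b'
      · simp [RD, h, fromBlocks_apply₂₂]
      · simp [RD, h, star_dist_rr m b b' h, Sum.inr.injEq, fromBlocks_apply₂₂]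

lemma sum_ite_const {m : ℕ} (a : Fin m) (x y : ℝ) :
    ∑ l : Fin m, (if a = l then x else y) = x + ((m : ℝ) - 1) * y := by
  have : ∀ l : Fin m, (if a = l then x else y) = (if a = l then x - y else 0) + y := by
    intro l; by_cases h : a = l <;> simp [h]
  rw [Finset.sum_congr rfl fun l _ => this l, Finset.sum_add_distrib,
    Finset.sum_ite_eq, Finset.sum_const]
  have : a ∈ (univ : Finset (Fin m)) := mem_univ a
  simp [this, Finset.card_univ]
  ring

lemma star_RTr (k : ℕ) :
    RTr (completeBipartiteGraph (Fin 1) (Fin (k + 1))) =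
      Sum.elim (fun _ => (k : ℝ) + 1) (fun _ => ((k : ℝ) + 2) / 2) := by
  funext v
  cases v with
  | inl a =>
    simp [RTr, star_RD, Fintype.sum_sum_type, fromBlocks_apply₁₁, fromBlocks_apply₁₂]
  | inr b =>
    simp only [RTr, star_RD, Fintype.sum_sum_type, fromBlocks_apply₂₁, fromBlocks_apply₂₂,
      Sum.elim_inr, of_apply, Fin.sum_univ_one]
    rw [sum_ite_const b 0 2⁻¹]
    push_cast
    ring

lemma star_RDL (k : ℕ) :
    RDL (completeBipartiteGraph (Fin 1) (Fin (k + 1))) =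
      fromBlocks (of fun _ _ => (k : ℝ) + 1) (of fun _ _ => -1) (of fun _ _ => -1)
        (of fun i j => if i = j then ((k : ℝ) + 2) / 2 else -2⁻¹) := by
  rw [RDL, star_RD, star_RTr]
  ext u v
  cases u with
  | inl a => cases v with
    | inl a' => simp [diagonal, fromBlocks_apply₁₁, Subsingleton.elim a a']
    | inr b => simp [diagonal, fromBlocks_apply₁₂]
  | inr b => cases v with
    | inl a => simp [diagonal, fromBlocks_apply₂₁]
    | inr b' =>
      by_cases h : b = b'
      · simp [diagonal, fromBlocks_apply₂₂, h]
      · simp [diagonal, fromBlocks_apply₂₂, h, Sum.inr.injEq]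

/-! ### The similarity transformation -/

/-- strictly-lower "ones in column 0" matrix -/
def Emat (k : ℕ) : Matrix (Fin (k+1)) (Fin (k+1)) ℝ :=
  fun i j => if j = 0 ∧ i ≠ 0 then 1 else 0

def P22 (k : ℕ) : Matrix (Fin (k+1)) (Fin (k+1)) ℝ :=
  fun i j => if j = 0 then 1 else if i = j then 1 else 0

lemma P22_eq (k : ℕ) : P22 k = 1 + Emat k := by
  ext i j
  by_cases h1 : j = 0 <;> by_cases h2 : i = j <;>
    simp_all [P22, Emat, one_apply]

lemma Emat_sq (k : ℕ) : Emat k * Emat k = 0 := by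
  ext i j
  rw [mul_apply]
  apply Finset.sum_eq_zero
  intro l _
  by_cases hl : l = 0 <;> simp [Emat, hl]

lemma P22_mul_inv (k : ℕ) : P22 k * (1 - Emat k) = 1 := by
  rw [P22_eq, mul_sub, mul_one, add_mul, one_mul, Emat_sq]
  abel

noncomputable def Pmat (k : ℕ) : Matrix (Fin 1 ⊕ Fin (k+1)) (Fin 1 ⊕ Fin (k+1)) ℝ :=
  fromBlocks 1 0 (of fun _ _ => 1) (P22 k)

lemma Pmat_det_isUnit (k : ℕ) : IsUnit (Pmat k).det := by
  rw [Pmat, det_fromBlocks_zero₁₂]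
  have h : (P22 k).det * (1 - Emat k).det = 1 := by
    rw [← det_mul, P22_mul_inv, det_one]
  simpa using IsUnit.of_mul_eq_one _ h

noncomputable def Nmat (k : ℕ) : Matrix (Fin 1 ⊕ Fin (k+1)) (Fin 1 ⊕ Fin (k+1)) ℝ :=
  fromBlocks 0 (of fun _ j => if j = 0 then -((k:ℝ)+1) else -1) 0
    (of fun i j => if i = j then (if i = 0 then (k:ℝ)+2 else ((k:ℝ)+3)/2)
      else if i = 0 then 2⁻¹ else 0)

lemma sum_mul_delta {m : ℕ} (f : Fin m → ℝ) (j : Fin m) :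
    ∑ l : Fin m, f l * (if l = j then 1 else 0) = f j := by
  simp [mul_ite, Finset.sum_ite_eq']

lemma sum_delta_mul {m : ℕ} (f : Fin m → ℝ) (i : Fin m) :
    ∑ l : Fin m, (if l = i then 1 else 0) * f l = f i := by
  simp [ite_mul, Finset.sum_ite_eq']

lemma star_key (k : ℕ) :
    RDL (completeBipartiteGraph (Fin 1) (Fin (k + 1))) * Pmat k = Pmat k * Nmat k := by
  rw [star_RDL]
  ext u v
  rw [mul_apply, mul_apply]
  rw [Fintype.sum_sum_type, Fintype.sum_sum_type]
  cases u with
  | inl a => cases v with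
    | inl a' =>
      simp only [fromBlocks_apply₁₁, fromBlocks_apply₁₂, fromBlocks_apply₂₁, fromBlocks_apply₂₂,
        Pmat, Nmat, Fin.sum_univ_one, of_apply]
      simp [Matrix.one_apply, Matrix.zero_apply, Subsingleton.elim a a', Finset.sum_const,
        Finset.card_univ, Subsingleton.elim (0 : Fin 1) a']
    | inr j =>
      simp only [fromBlocks_apply₁₁, fromBlocks_apply₁₂, fromBlocks_apply₂₁, fromBlocks_apply₂₂,
        Pmat, Nmat, Fin.sum_univ_one, of_apply, Matrix.one_apply, Matrix.zero_apply]
      by_cases hj : j = 0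
      · simp [P22, hj, Finset.sum_const, Finset.card_univ, Subsingleton.elim a (0 : Fin 1)]
      · have ha : a = 0 := Subsingleton.elim _ _
        subst ha
        simp [P22, hj, mul_ite, Finset.sum_ite_eq']
  | inr i => cases v with
    | inl a =>
      simp only [fromBlocks_apply₁₁, fromBlocks_apply₁₂, fromBlocks_apply₂₁, fromBlocks_apply₂₂,
        Pmat, Nmat, Fin.sum_univ_one, of_apply, Matrix.one_apply, Matrix.zero_apply]
      simp only [mul_one, mul_zero, Finset.sum_const, Finset.card_univ]
      rw [sum_ite_const i (((k:ℝ)+2)/2) (-2⁻¹)]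
      have ha : (0 : Fin 1) = a := Subsingleton.elim _ _
      rw [← ha]
      ring_nf
      push_cast
      ring
    | inr j =>
      simp only [fromBlocks_apply₁₁, fromBlocks_apply₁₂, fromBlocks_apply₂₁, fromBlocks_apply₂₂,
        Pmat, Nmat, Fin.sum_univ_one, of_apply, Matrix.one_apply, Matrix.zero_apply]
      simp only [mul_zero, zero_mul, add_zero, mul_one, zero_add]
      -- LHS: ∑ l, A22 i l * P22 l j ; RHS: N12 j + ∑ l, P22 i l * N22 l j
      have hP : ∀ i' l : Fin (k+1), P22 k i' l =
          (if l = 0 then (1:ℝ) else 0) + (if i' = l ∧ l ≠ 0 then 1 else 0) := by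
        intro i' l
        by_cases h1 : l = 0 <;> by_cases h2 : i' = l <;> simp_all [P22]
      by_cases hj : j = 0
      · subst hj
        have hL : ∑ l, (if i = l then ((k:ℝ)+2)/2 else -2⁻¹) * P22 k l 0
            = ∑ l, (if i = l then ((k:ℝ)+2)/2 else -2⁻¹) := by
          apply Finset.sum_congr rfl
          intro l _
          simp [P22]
        rw [hL, sum_ite_const i (((k:ℝ)+2)/2) (-2⁻¹)]
        have hR : ∑ l, P22 k i l * (if l = 0 then (if l = 0 then (k:ℝ)+2 else ((k:ℝ)+3)/2)
            else if l = 0 then 2⁻¹ else 0)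
            = ∑ l, P22 k i l * (if l = 0 then (k:ℝ)+2 else 0) := by
          apply Finset.sum_congr rfl
          intro l _
          by_cases hl : l = 0 <;> simp [hl]
        rw [hR]
        simp only [hP, add_mul, Finset.sum_add_distrib, ite_mul, one_mul, zero_mul]
        rw [Finset.sum_ite_eq']
        have : ∑ l, (if i = l ∧ l ≠ 0 then (if l = 0 then (k:ℝ)+2 else 0) else 0) = 0 := by
          apply Finset.sum_eq_zero
          intro l _
          by_cases h1 : l = 0 <;> simp [h1]
        rw [this]
        simp
        push_cast
        ring
      · -- j ≠ 0
        have hL : ∑ l, (if i = l then ((k:ℝ)+2)/2 else -2⁻¹) * P22 k l j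
            = (if i = j then ((k:ℝ)+2)/2 else -2⁻¹) := by
          have : ∀ l, (if i = l then ((k:ℝ)+2)/2 else -2⁻¹) * P22 k l j
              = (if i = l then ((k:ℝ)+2)/2 else -2⁻¹) * (if l = j then 1 else 0) := by
            intro l; simp [P22, hj]
          rw [Finset.sum_congr rfl fun l _ => this l, sum_mul_delta]
        rw [hL]
        have hN : ∀ l, (if l = j then (if l = 0 then (k:ℝ)+2 else ((k:ℝ)+3)/2)
            else if l = 0 then 2⁻¹ else 0)
            = (if l = j then ((k:ℝ)+3)/2 else 0) + (if l = 0 then 2⁻¹ else 0) := by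
          intro l
          by_cases h1 : l = j <;> by_cases h2 : l = 0 <;> simp_all
        have hR : ∑ l, P22 k i l * (if l = j then (if l = 0 then (k:ℝ)+2 else ((k:ℝ)+3)/2)
            else if l = 0 then 2⁻¹ else 0)
            = (P22 k i j) * (((k:ℝ)+3)/2) + (P22 k i 0) * 2⁻¹ := by
          calc ∑ l, P22 k i l * (if l = j then (if l = 0 then (k:ℝ)+2 else ((k:ℝ)+3)/2)
              else if l = 0 then 2⁻¹ else 0)
              = ∑ l, (P22 k i l * (if l = j then ((k:ℝ)+3)/2 else 0)
                + P22 k i l * (if l = 0 then 2⁻¹ else 0)) := by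
                apply Finset.sum_congr rfl
                intro l _
                rw [hN l, mul_add]
            _ = _ := by
                rw [Finset.sum_add_distrib]
                congr 1
                · simp [mul_ite, Finset.sum_ite_eq']
                · simp [mul_ite, Finset.sum_ite_eq']
        rw [hR]
        have hP0 : P22 k i 0 = 1 := by simp [P22]
        have hPij : P22 k i j = if i = j then 1 else 0 := by simp [P22, hj]
        rw [hP0, hPij]
        by_cases hij : i = j <;> simp [hij, hj] <;> ring

/-! ### Computing the characteristic polynomial of `Nmat` -/

lemma N22_triangular (k : ℕ) :
    Matrix.BlockTriangular (of fun i j => if i = j then (if i = 0 then (k:ℝ)+2 else ((k:ℝ)+3)/2)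
      else if i = 0 then 2⁻¹ else 0 : Matrix (Fin (k+1)) (Fin (k+1)) ℝ) id := by
  intro i j hij
  have h1 : i ≠ j := hij.ne'
  have h2 : i ≠ 0 := (lt_of_le_of_lt (Fin.zero_le j) hij).ne'
  simp [h1, h2]

lemma Nmat_charpoly (k : ℕ) :
    (Nmat k).charpoly = (X - C 0) * ∏ i : Fin (k+1),
      (X - C (if i = 0 then (k:ℝ)+2 else ((k:ℝ)+3)/2)) := by
  rw [Nmat, Matrix.charpoly_fromBlocks_zero₂₁]
  congr 1
  · have h : Matrix.BlockTriangular (0 : Matrix (Fin 1) (Fin 1) ℝ) id := by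
      intro i j hij
      rfl
    rw [Matrix.charpoly_of_upperTriangular _ h]
    simp
  · rw [Matrix.charpoly_of_upperTriangular _ (N22_triangular k)]
    apply Finset.prod_congr rfl
    intro i _
    simp

theorem stmt13 (n : ℕ) (hn : 2 ≤ n) :
    (RDL (completeBipartiteGraph (Fin 1) (Fin (n - 1)))).charpoly.roots =
      0 ::ₘ (n : ℝ) ::ₘ Multiset.replicate (n - 2) (((n : ℝ) + 1) / 2) := by
  obtain ⟨k, rfl⟩ : ∃ k, n = k + 2 := ⟨n - 2, by omega⟩
  have hm : k + 2 - 1 = k + 1 := by omega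
  rw [hm]
  have hcp := charpoly_similar (star_key k) (Pmat_det_isUnit k)
  rw [hcp, Nmat_charpoly]
  have hd : ∏ i : Fin (k+1), (X - C (if i = 0 then (k:ℝ)+2 else ((k:ℝ)+3)/2))
      = (Multiset.map (fun a : ℝ => X - C a)
          (((k:ℝ)+2) ::ₘ Multiset.replicate k (((k:ℝ)+3)/2))).prod := by
    rw [Finset.prod_eq_multiset_prod,
      show (fun i : Fin (k+1) => X - C (if i = 0 then ((k:ℝ)+2) else ((k:ℝ)+3)/2))
        = (fun a : ℝ => X - C a) ∘ (fun i : Fin (k+1) => if i = 0 then ((k:ℝ)+2) else ((k:ℝ)+3)/2)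
        from rfl,
      ← Multiset.map_map]
    congr 1
    congr 1
    rw [Fin.univ_val_map, List.ofFn_succ]
    simp [Fin.succ_ne_zero, List.ofFn_const, Multiset.coe_replicate]
    rfl
  rw [hd, show (X - C (0:ℝ)) * (Multiset.map (fun a : ℝ => X - C a)
      (((k:ℝ)+2) ::ₘ Multiset.replicate k (((k:ℝ)+3)/2))).prod
      = (Multiset.map (fun a : ℝ => X - C a)
          ((0:ℝ) ::ₘ ((k:ℝ)+2) ::ₘ Multiset.replicate k (((k:ℝ)+3)/2))).prod from by
    simp [Multiset.map_cons, Multiset.prod_cons]]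
  rw [Polynomial.roots_multiset_prod_X_sub_C]
  have h2 : k + 2 - 2 = k := by omega
  rw [h2]
  have h3 : ((k:ℝ)+3) = ((k:ℝ)+2+1) := by ring
  rw [h3]
  push_cast
  norm_num
end
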